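/- arXiv:1210.1380 — 4 statements merged into one kernel-verified Lean document; each statement's English description precedes it below -/
import Mathlib

section
/- Let T be a bounded operator on a complex separable Hilbert space H and let (P_n) be a proper Følner sequence for T. Then for every compact operator K on H one has ‖K P_n − P_n K‖ → 0 in operator norm, and (P_n) is a proper Følner sequence for T + K. -/
set_option linter.unusedSectionVars false
set_option maxHeartbeats 1000000


noncomputable section

open Filter Topology TopologicalSpace

/-- The Hilbert–Schmidt norm of an operator, computed via a Hilbert basis of the space
(the value is independent of the choice of basis; for a finite-rank orthogonal
projection `P` it equals `√(rank P)`). -/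
noncomputable def hsNorm {H : Type*} [NormedAddCommGroup H] [InnerProductSpace ℂ H]
    [CompleteSpace H] (A : H →L[ℂ] H) : ℝ :=
  Real.sqrt (∑' i : (exists_hilbertBasis ℂ H).choose, ‖A (i : H)‖ ^ 2)

variable {H : Type*} [NormedAddCommGroup H] [InnerProductSpace ℂ H] [CompleteSpace H]

/-- An orthogonal projection: a self-adjoint idempotent bounded operator. -/
def IsOrthProjection (P : H →L[ℂ] H) : Prop :=
  IsIdempotentElem P ∧ IsSelfAdjoint P

/-- A nonzero finite-rank orthogonal projection. -/
def IsFinRankProj (P : H →L[ℂ] H) : Prop :=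
  IsOrthProjection P ∧ P ≠ 0 ∧ FiniteDimensional ℂ (LinearMap.range (P : H →ₗ[ℂ] H))

/-- `φ(T,P) = ‖TP - PT‖₂ / ‖P‖₂`. -/
noncomputable def phi (T P : H →L[ℂ] H) : ℝ :=
  hsNorm (T * P - P * T) / hsNorm P

/-- A proper Følner sequence for `T`: an increasing sequence of nonzero finite-rank
orthogonal projections converging strongly to the identity with `φ(T,P_n) → 0`. -/
def IsProperFolnerSeq (T : H →L[ℂ] H) (P : ℕ → H →L[ℂ] H) : Prop :=
  (∀ n, IsFinRankProj (P n)) ∧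
  (∀ n, (P (n + 1) - P n).IsPositive) ∧
  (∀ x : H, Tendsto (fun n => P n x) atTop (nhds x)) ∧
  Tendsto (fun n => phi T (P n)) atTop (nhds 0)

/-- A strongly non-Følner operator: `φ(T,P) ≥ ε` for some `ε > 0` and every nonzero
finite-rank orthogonal projection `P`. -/
def StronglyNonFolner (T : H →L[ℂ] H) : Prop :=
  ∃ ε > (0 : ℝ), ∀ P : H →L[ℂ] H, IsFinRankProj P → ε ≤ phi T P

/-- The numerical range of an operator. -/
def numRange (A : H →L[ℂ] H) : Set ℂ :=
  {z : ℂ | ∃ x : H, ‖x‖ = 1 ∧ (inner ℂ (A x) x : ℂ) = z}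

/-- A finite operator in the sense of Williams: `0 ∈ closure W([T,X])` for every `X`. -/
def FiniteOperator (T : H →L[ℂ] H) : Prop :=
  ∀ X : H →L[ℂ] H, (0 : ℂ) ∈ closure (numRange (T * X - X * T))

/-- A finite block reducible operator: one having a nonzero finite-dimensional
reducing subspace. -/
def FiniteBlockReducible (T : H →L[ℂ] H) : Prop :=
  ∃ H₀ : Submodule ℂ H, H₀ ≠ ⊥ ∧ FiniteDimensional ℂ H₀ ∧
    (∀ x ∈ H₀, T x ∈ H₀) ∧ (∀ x ∈ H₀ᗮ, T x ∈ H₀ᗮ)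

noncomputable def hb : HilbertBasis ((exists_hilbertBasis ℂ H).choose) ℂ H :=
  (exists_hilbertBasis ℂ H).choose_spec.choose

lemma hb_apply (i : (exists_hilbertBasis ℂ H).choose) : hb i = (i : H) :=
  congrFun (exists_hilbertBasis ℂ H).choose_spec.choose_spec i

lemma parseval (x : H) :
    HasSum (fun i : (exists_hilbertBasis ℂ H).choose => ‖(inner ℂ ((i : H)) x : ℂ)‖ ^ 2) (‖x‖ ^ 2) := by
  have h := ((hb (H := H)).hasSum_inner_mul_inner x x).mapL Complex.reCLM
  have h1 : (Complex.reCLM (inner ℂ x x : ℂ)) = ‖x‖ ^ 2 := by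
    simpa using inner_self_eq_norm_sq (𝕜 := ℂ) x
  rw [h1] at h
  convert h using 2 with i
  rw [hb_apply]
  rw [← inner_conj_symm x ((i : H))]
  simp only [Complex.reCLM_apply]
  rw [Complex.conj_mul', ← Complex.ofReal_pow, Complex.ofReal_re]

lemma norm_sum_sq {r : ℕ} {g : Fin r → H} (hg : Orthonormal ℂ g) (c : Fin r → ℂ) :
    ‖∑ k, c k • g k‖ ^ 2 = ∑ k, ‖c k‖ ^ 2 := by
  rw [← inner_self_eq_norm_sq (𝕜 := ℂ)]
  rw [hg.inner_sum c c Finset.univ]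
  rw [map_sum]
  congr 1; ext k
  simp [RCLike.conj_mul, ← Complex.ofReal_pow]
lemma proj_fix {P : H →L[ℂ] H} (h1 : IsIdempotentElem P) {y : H}
    (hy : y ∈ LinearMap.range (P : H →ₗ[ℂ] H)) : P y = y := by
  obtain ⟨z, rfl⟩ := hy
  conv_rhs => rw [← h1]
  rfl

lemma proj_inner {P : H →L[ℂ] H} (h2 : IsSelfAdjoint P) (u v : H) :
    (inner ℂ u (P v) : ℂ) = inner ℂ (P u) v := by
  rw [← ContinuousLinearMap.adjoint_inner_left]
  congr 1
  rw [← ContinuousLinearMap.star_eq_adjoint, h2.star_eq]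

lemma g_orthonormal (P : H →L[ℂ] H) [FiniteDimensional ℂ (LinearMap.range (P : H →ₗ[ℂ] H))] :
    Orthonormal ℂ (fun k => ((stdOrthonormalBasis ℂ (LinearMap.range (P : H →ₗ[ℂ] H))) k : H)) := by
  rw [orthonormal_iff_ite]
  intro i j
  have h := (stdOrthonormalBasis ℂ (LinearMap.range (P : H →ₗ[ℂ] H))).orthonormal
  rw [orthonormal_iff_ite] at h
  simpa [Submodule.coe_inner] using h i j

lemma proj_repr {P : H →L[ℂ] H} (h1 : IsIdempotentElem P) (h2 : IsSelfAdjoint P)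
    [FiniteDimensional ℂ (LinearMap.range (P : H →ₗ[ℂ] H))] (x : H) :
    P x = ∑ k, (inner ℂ ((stdOrthonormalBasis ℂ (LinearMap.range (P : H →ₗ[ℂ] H))) k : H) x : ℂ) •
      ((stdOrthonormalBasis ℂ (LinearMap.range (P : H →ₗ[ℂ] H))) k : H) := by
  set V := LinearMap.range (P : H →ₗ[ℂ] H)
  set b := stdOrthonormalBasis ℂ V
  set v : V := ⟨P x, LinearMap.mem_range_self _ x⟩ with hv
  have h0 : ((v : H)) = P x := rfl
  have hsum := b.sum_repr v
  have : ((∑ k, b.repr v k • b k : V) : H) = ∑ k, b.repr v k • (b k : H) := by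
    push_cast; rfl
  rw [← h0, ← hsum, this]
  congr 1
  ext k
  congr 1
  rw [b.repr_apply_apply]
  have : (inner ℂ (b k) v : ℂ) = inner ℂ ((b k : H)) (P x) := by
    simp [Submodule.coe_inner, hv]
  rw [this, proj_inner h2, proj_fix h1 (b k).2]

lemma PC_hasSum {P : H →L[ℂ] H} (h1 : IsIdempotentElem P) (h2 : IsSelfAdjoint P)
    [FiniteDimensional ℂ (LinearMap.range (P : H →ₗ[ℂ] H))] (C : H →L[ℂ] H) :
    HasSum (fun i : (exists_hilbertBasis ℂ H).choose => ‖(P * C) (i : H)‖ ^ 2)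
      (∑ k, ‖(ContinuousLinearMap.adjoint C)
        ((stdOrthonormalBasis ℂ (LinearMap.range (P : H →ₗ[ℂ] H))) k : H)‖ ^ 2) := by
  set b := stdOrthonormalBasis ℂ (LinearMap.range (P : H →ₗ[ℂ] H))
  have hpt : ∀ i : (exists_hilbertBasis ℂ H).choose,
      ‖(P * C) (i : H)‖ ^ 2 =
      ∑ k, ‖(inner ℂ ((i : H)) ((ContinuousLinearMap.adjoint C) (b k : H)) : ℂ)‖ ^ 2 := by
    intro i
    rw [ContinuousLinearMap.mul_apply, proj_repr h1 h2 (C (i : H)),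
      norm_sum_sq (g_orthonormal P)]
    congr 1; ext k
    rw [← ContinuousLinearMap.adjoint_inner_left, ← norm_inner_symm]
  have : ∀ k ∈ Finset.univ, HasSum
      (fun i : (exists_hilbertBasis ℂ H).choose =>
        ‖(inner ℂ ((i : H)) ((ContinuousLinearMap.adjoint C) (b k : H)) : ℂ)‖ ^ 2)
      (‖(ContinuousLinearMap.adjoint C) (b k : H)‖ ^ 2) := fun k _ =>
    parseval _
  have hs := hasSum_sum this
  exact hs.congr_fun fun i => hpt i

lemma sqrt_add_le' {x y : ℝ} (hx : 0 ≤ x) (hy : 0 ≤ y) :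
    Real.sqrt (x + y) ≤ Real.sqrt x + Real.sqrt y := by
  have h1 := Real.sq_sqrt hx
  have h2 := Real.sq_sqrt hy
  have h3 := Real.sqrt_nonneg x
  have h4 := Real.sqrt_nonneg y
  nlinarith [Real.sq_sqrt (by linarith : (0:ℝ) ≤ x + y), Real.sqrt_nonneg (x+y),
    Real.sqrt_le_sqrt (show x + y ≤ (Real.sqrt x + Real.sqrt y)^2 by nlinarith),
    Real.sqrt_sq (by linarith : (0:ℝ) ≤ Real.sqrt x + Real.sqrt y)]

lemma P_hasSum {P : H →L[ℂ] H} (h1 : IsIdempotentElem P) (h2 : IsSelfAdjoint P)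
    [FiniteDimensional ℂ (LinearMap.range (P : H →ₗ[ℂ] H))] :
    HasSum (fun i : (exists_hilbertBasis ℂ H).choose => ‖P (i : H)‖ ^ 2)
      ((Module.finrank ℂ (LinearMap.range (P : H →ₗ[ℂ] H)) : ℝ)) := by
  have h := PC_hasSum h1 h2 (1 : H →L[ℂ] H)
  rw [mul_one] at h
  convert h using 1
  have hadj : ContinuousLinearMap.adjoint (1 : H →L[ℂ] H) = 1 := by
    rw [← ContinuousLinearMap.star_eq_adjoint, star_one]
  rw [hadj]
  simp [(g_orthonormal P).1 _]

lemma AP_bound {P : H →L[ℂ] H} (h1 : IsIdempotentElem P) (h2 : IsSelfAdjoint P)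
    [FiniteDimensional ℂ (LinearMap.range (P : H →ₗ[ℂ] H))] (A : H →L[ℂ] H) :
    Summable (fun i : (exists_hilbertBasis ℂ H).choose => ‖(A * P) (i : H)‖ ^ 2) ∧
    ∑' i : (exists_hilbertBasis ℂ H).choose, ‖(A * P) (i : H)‖ ^ 2 ≤
      ‖A‖ ^ 2 * (Module.finrank ℂ (LinearMap.range (P : H →ₗ[ℂ] H)) : ℝ) := by
  have hS := P_hasSum h1 h2
  have key : ∀ i : (exists_hilbertBasis ℂ H).choose,
      ‖(A * P) (i : H)‖ ^ 2 ≤ ‖A‖ ^ 2 * ‖P (i : H)‖ ^ 2 := by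
    intro i
    rw [ContinuousLinearMap.mul_apply, ← mul_pow]
    exact pow_le_pow_left₀ (norm_nonneg _) (A.le_opNorm _) 2
  have hR : Summable (fun i : (exists_hilbertBasis ℂ H).choose =>
      ‖A‖ ^ 2 * ‖P (i : H)‖ ^ 2) := hS.summable.mul_left _
  have hsumm : Summable (fun i : (exists_hilbertBasis ℂ H).choose => ‖(A * P) (i : H)‖ ^ 2) :=
    Summable.of_nonneg_of_le (fun i => by positivity) key hR
  refine ⟨hsumm, ?_⟩
  calc ∑' i : (exists_hilbertBasis ℂ H).choose, ‖(A * P) (i : H)‖ ^ 2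
      ≤ ∑' i : (exists_hilbertBasis ℂ H).choose, ‖A‖ ^ 2 * ‖P (i : H)‖ ^ 2 :=
        Summable.tsum_le_tsum key hsumm hR
    _ = ‖A‖ ^ 2 * (Module.finrank ℂ (LinearMap.range (P : H →ₗ[ℂ] H)) : ℝ) := by
        rw [tsum_mul_left, hS.tsum_eq]

lemma PC_bound {P : H →L[ℂ] H} (h1 : IsIdempotentElem P) (h2 : IsSelfAdjoint P)
    [FiniteDimensional ℂ (LinearMap.range (P : H →ₗ[ℂ] H))] (C : H →L[ℂ] H) :
    Summable (fun i : (exists_hilbertBasis ℂ H).choose => ‖(P * C) (i : H)‖ ^ 2) ∧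
    ∑' i : (exists_hilbertBasis ℂ H).choose, ‖(P * C) (i : H)‖ ^ 2 ≤
      (Module.finrank ℂ (LinearMap.range (P : H →ₗ[ℂ] H)) : ℝ) * ‖C‖ ^ 2 := by
  have h := PC_hasSum h1 h2 C
  refine ⟨h.summable, ?_⟩
  rw [h.tsum_eq]
  have : ∀ k, ‖(ContinuousLinearMap.adjoint C)
      ((stdOrthonormalBasis ℂ (LinearMap.range (P : H →ₗ[ℂ] H))) k : H)‖ ^ 2 ≤ ‖C‖ ^ 2 := by
    intro k
    have hle : ‖(ContinuousLinearMap.adjoint C)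
        ((stdOrthonormalBasis ℂ (LinearMap.range (P : H →ₗ[ℂ] H))) k : H)‖ ≤ ‖C‖ := by
      have := (ContinuousLinearMap.adjoint C).le_opNorm
        ((stdOrthonormalBasis ℂ (LinearMap.range (P : H →ₗ[ℂ] H))) k : H)
      rw [(g_orthonormal P).1 k, mul_one] at this
      rwa [← ContinuousLinearMap.star_eq_adjoint, norm_star] at this
    exact pow_le_pow_left₀ (norm_nonneg _) hle 2
  calc (∑ k, ‖(ContinuousLinearMap.adjoint C)
        ((stdOrthonormalBasis ℂ (LinearMap.range (P : H →ₗ[ℂ] H))) k : H)‖ ^ 2)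
      ≤ ∑ _k : Fin (Module.finrank ℂ (LinearMap.range (P : H →ₗ[ℂ] H))), ‖C‖ ^ 2 :=
        Finset.sum_le_sum fun k _ => this k
    _ = (Module.finrank ℂ (LinearMap.range (P : H →ₗ[ℂ] H)) : ℝ) * ‖C‖ ^ 2 := by
        simp [Finset.sum_const, mul_comm]

lemma S_le {Cc A B : H →L[ℂ] H} (hpt : ∀ x : H, ‖Cc x‖ ≤ ‖A x‖ + ‖B x‖)
    (hA : Summable (fun i : (exists_hilbertBasis ℂ H).choose => ‖A (i : H)‖ ^ 2))
    (hB : Summable (fun i : (exists_hilbertBasis ℂ H).choose => ‖B (i : H)‖ ^ 2)) :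
    Summable (fun i : (exists_hilbertBasis ℂ H).choose => ‖Cc (i : H)‖ ^ 2) ∧
    ∑' i : (exists_hilbertBasis ℂ H).choose, ‖Cc (i : H)‖ ^ 2 ≤
      2 * ∑' i : (exists_hilbertBasis ℂ H).choose, ‖A (i : H)‖ ^ 2 +
      2 * ∑' i : (exists_hilbertBasis ℂ H).choose, ‖B (i : H)‖ ^ 2 := by
  have key : ∀ i : (exists_hilbertBasis ℂ H).choose,
      ‖Cc (i : H)‖ ^ 2 ≤ 2 * ‖A (i : H)‖ ^ 2 + 2 * ‖B (i : H)‖ ^ 2 := by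
    intro i
    have h2 : ‖Cc (i : H)‖ ^ 2 ≤ (‖A (i : H)‖ + ‖B (i : H)‖) ^ 2 :=
      pow_le_pow_left₀ (norm_nonneg _) (hpt (i : H)) 2
    nlinarith [sq_nonneg (‖A (i : H)‖ - ‖B (i : H)‖)]
  have hR : Summable (fun i : (exists_hilbertBasis ℂ H).choose =>
      2 * ‖A (i : H)‖ ^ 2 + 2 * ‖B (i : H)‖ ^ 2) := (hA.mul_left 2).add (hB.mul_left 2)
  have hsumm : Summable (fun i : (exists_hilbertBasis ℂ H).choose => ‖Cc (i : H)‖ ^ 2) :=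
    Summable.of_nonneg_of_le (fun i => by positivity) key hR
  refine ⟨hsumm, ?_⟩
  calc ∑' i : (exists_hilbertBasis ℂ H).choose, ‖Cc (i : H)‖ ^ 2
      ≤ ∑' i : (exists_hilbertBasis ℂ H).choose,
          (2 * ‖A (i : H)‖ ^ 2 + 2 * ‖B (i : H)‖ ^ 2) := Summable.tsum_le_tsum key hsumm hR
    _ = _ := by rw [Summable.tsum_add (hA.mul_left 2) (hB.mul_left 2), tsum_mul_left, tsum_mul_left]

lemma phi_bound {P : H →L[ℂ] H} (h1 : IsIdempotentElem P) (h2 : IsSelfAdjoint P)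
    (hne : P ≠ 0) [FiniteDimensional ℂ (LinearMap.range (P : H →ₗ[ℂ] H))] (T K : H →L[ℂ] H) :
    phi (T + K) P ≤ Real.sqrt 2 * phi T P + 2 * (‖(1 - P) * K‖ + ‖K * (1 - P)‖) := by
  set r : ℝ := (Module.finrank ℂ (LinearMap.range (P : H →ₗ[ℂ] H)) : ℝ) with hrdef
  have hrpos : (0:ℝ) < r := by
    have hbot : LinearMap.range (P : H →ₗ[ℂ] H) ≠ ⊥ := by
      intro h
      apply hne
      ext x
      have : P x ∈ LinearMap.range (P : H →ₗ[ℂ] H) := LinearMap.mem_range_self _ x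
      rw [h] at this
      simpa using this
    have : 0 < Module.finrank ℂ (LinearMap.range (P : H →ₗ[ℂ] H)) :=
      Module.finrank_pos_iff.mpr (Submodule.nontrivial_iff_ne_bot.mpr hbot)
    rw [hrdef]
    exact_mod_cast this
  have hsP : hsNorm P = Real.sqrt r := by rw [hsNorm, (P_hasSum h1 h2).tsum_eq]
  have hsPpos : 0 < hsNorm P := by rw [hsP]; exact Real.sqrt_pos.mpr hrpos
  set a := ‖(1 - P) * K‖ with hadef
  set b := ‖K * (1 - P)‖ with hbdef
  have ha : 0 ≤ a := norm_nonneg _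
  have hb : 0 ≤ b := norm_nonneg _
  have hTP := AP_bound h1 h2 T
  have hPT := PC_bound h1 h2 T
  have hDpt : ∀ x : H, ‖(T*P - P*T) x‖ ≤ ‖(T*P) x‖ + ‖(P*T) x‖ := fun x => by
    rw [ContinuousLinearMap.sub_apply]; exact norm_sub_le _ _
  have hD := S_le hDpt hTP.1 hPT.1
  have hX := AP_bound h1 h2 ((1 - P) * K)
  have hY := PC_bound h1 h2 (K * (1 - P))
  have hCid : K * P - P * K = ((1 - P) * K) * P - P * (K * (1 - P)) := by noncomm_ring
  have hCpt : ∀ x : H, ‖(K*P - P*K) x‖ ≤ ‖(((1-P)*K)*P) x‖ + ‖(P*(K*(1-P))) x‖ := by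
    intro x
    rw [hCid, ContinuousLinearMap.sub_apply]
    exact norm_sub_le _ _
  have hC := S_le hCpt hX.1 hY.1
  have hSD0 : 0 ≤ ∑' i : (exists_hilbertBasis ℂ H).choose, ‖(T*P - P*T) (i : H)‖ ^ 2 :=
    tsum_nonneg fun i => by positivity
  have hSC0 : 0 ≤ ∑' i : (exists_hilbertBasis ℂ H).choose, ‖(K*P - P*K) (i : H)‖ ^ 2 :=
    tsum_nonneg fun i => by positivity
  have hsC_le : hsNorm (K*P - P*K) ≤ Real.sqrt (2*r) * (a + b) := by
    rw [hsNorm]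
    calc Real.sqrt (∑' i : (exists_hilbertBasis ℂ H).choose, ‖(K*P - P*K) (i : H)‖ ^ 2)
        ≤ Real.sqrt (2*r*(a^2 + b^2)) := Real.sqrt_le_sqrt (by nlinarith [hC.2, hX.2, hY.2])
      _ = Real.sqrt (2*r) * Real.sqrt (a^2 + b^2) := Real.sqrt_mul (by positivity) _
      _ ≤ Real.sqrt (2*r) * (a + b) := by
          have h' : Real.sqrt (a^2 + b^2) ≤ a + b := by
            calc Real.sqrt (a^2 + b^2) ≤ Real.sqrt (a^2) + Real.sqrt (b^2) :=
                  sqrt_add_le' (by positivity) (by positivity)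
              _ = a + b := by rw [Real.sqrt_sq ha, Real.sqrt_sq hb]
          exact mul_le_mul_of_nonneg_left h' (Real.sqrt_nonneg _)
  have hDid : (T+K)*P - P*(T+K) = (T*P - P*T) + (K*P - P*K) := by noncomm_ring
  have hDpt' : ∀ x : H, ‖((T+K)*P - P*(T+K)) x‖ ≤ ‖(T*P-P*T) x‖ + ‖(K*P-P*K) x‖ := by
    intro x
    rw [hDid, ContinuousLinearMap.add_apply]
    exact norm_add_le _ _
  have hD' := S_le hDpt' hD.1 hC.1
  have hhsD' : hsNorm ((T+K)*P - P*(T+K)) ≤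
      Real.sqrt 2 * hsNorm (T*P-P*T) + Real.sqrt 2 * hsNorm (K*P-P*K) := by
    rw [hsNorm, hsNorm, hsNorm]
    calc Real.sqrt (∑' i : (exists_hilbertBasis ℂ H).choose, ‖((T+K)*P - P*(T+K)) (i : H)‖ ^ 2)
        ≤ Real.sqrt (2 * ∑' i : (exists_hilbertBasis ℂ H).choose, ‖(T*P-P*T) (i : H)‖ ^ 2 +
            2 * ∑' i : (exists_hilbertBasis ℂ H).choose, ‖(K*P-P*K) (i : H)‖ ^ 2) :=
          Real.sqrt_le_sqrt hD'.2
      _ ≤ Real.sqrt (2 * ∑' i : (exists_hilbertBasis ℂ H).choose, ‖(T*P-P*T) (i : H)‖ ^ 2) +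
          Real.sqrt (2 * ∑' i : (exists_hilbertBasis ℂ H).choose, ‖(K*P-P*K) (i : H)‖ ^ 2) :=
          sqrt_add_le' (by positivity) (by positivity)
      _ = _ := by rw [Real.sqrt_mul (by norm_num), Real.sqrt_mul (by norm_num : (0:ℝ) ≤ 2)]
  have hs2 : Real.sqrt 2 * Real.sqrt (2*r) = 2 * Real.sqrt r := by
    rw [← Real.sqrt_mul (by norm_num), show (2:ℝ)*(2*r) = 2^2*r by ring,
      Real.sqrt_mul (by positivity), Real.sqrt_sq (by norm_num : (0:ℝ) ≤ 2)]
  have hfinal : hsNorm ((T+K)*P - P*(T+K)) ≤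
      Real.sqrt 2 * hsNorm (T*P-P*T) + 2 * Real.sqrt r * (a + b) := by
    have h3 : Real.sqrt 2 * hsNorm (K*P-P*K) ≤ Real.sqrt 2 * (Real.sqrt (2*r) * (a+b)) :=
      mul_le_mul_of_nonneg_left hsC_le (Real.sqrt_nonneg _)
    calc hsNorm ((T+K)*P - P*(T+K)) ≤
        Real.sqrt 2 * hsNorm (T*P-P*T) + Real.sqrt 2 * hsNorm (K*P-P*K) := hhsD'
      _ ≤ Real.sqrt 2 * hsNorm (T*P-P*T) + Real.sqrt 2 * (Real.sqrt (2*r) * (a+b)) := by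
          linarith
      _ = Real.sqrt 2 * hsNorm (T*P-P*T) + 2 * Real.sqrt r * (a + b) := by
          rw [← mul_assoc, hs2]
  have hsr_ne : Real.sqrt r ≠ 0 := by positivity
  calc phi (T+K) P = hsNorm ((T+K)*P - P*(T+K)) / hsNorm P := rfl
    _ ≤ (Real.sqrt 2 * hsNorm (T*P-P*T) + 2 * Real.sqrt r * (a + b)) / hsNorm P :=
        (div_le_div_iff_of_pos_right hsPpos).mpr hfinal
    _ = Real.sqrt 2 * (hsNorm (T*P-P*T) / hsNorm P) + 2 * Real.sqrt r * (a + b) / Real.sqrt r := by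
        rw [hsP, add_div, mul_div_assoc]
    _ = Real.sqrt 2 * phi T P + 2 * (a + b) := by
        rw [phi, hsP]
        congr 1
        field_simp

lemma proj_norm_le {Q : H →L[ℂ] H} (h1 : IsIdempotentElem Q) (h2 : IsSelfAdjoint Q) :
    ‖Q‖ ≤ 1 := by
  refine ContinuousLinearMap.opNorm_le_bound Q zero_le_one fun x => ?_
  rw [one_mul]
  have hq : ‖Q x‖ ^ 2 = RCLike.re (inner ℂ (Q x) (Q x) : ℂ) :=
    (inner_self_eq_norm_sq (𝕜 := ℂ) (Q x)).symm
  have h3 : (inner ℂ (Q x) (Q x) : ℂ) = inner ℂ (Q x) x := by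
    calc (inner ℂ (Q x) (Q x) : ℂ) = inner ℂ (Q (Q x)) x := proj_inner h2 (Q x) x
      _ = inner ℂ (Q x) x := by rw [proj_fix h1 (y := Q x) (LinearMap.mem_range_self (Q : H →ₗ[ℂ] H) x)]
  have h4 : RCLike.re (inner ℂ (Q x) x : ℂ) ≤ ‖(inner ℂ (Q x) x : ℂ)‖ := RCLike.re_le_norm _
  have h5 : ‖(inner ℂ (Q x) x : ℂ)‖ ≤ ‖Q x‖ * ‖x‖ := norm_inner_le_norm _ _
  rcases (norm_nonneg (Q x)).eq_or_lt' with h | h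
  · rw [h]; exact norm_nonneg x
  · have : ‖Q x‖ ^ 2 ≤ ‖Q x‖ * ‖x‖ := by rw [hq, h3]; exact le_trans h4 h5
    nlinarith

lemma finrank_compact (G : H →L[ℂ] H) (hfin : FiniteDimensional ℂ (LinearMap.range (G : H →ₗ[ℂ] H))) :
    IsCompactOperator ⇑G := by
  set W := LinearMap.range (G : H →ₗ[ℂ] H) with hW
  haveI : FiniteDimensional ℂ W := hfin
  haveI : ProperSpace W := FiniteDimensional.proper ℂ W
  refine ⟨Subtype.val '' Metric.closedBall (0 : W) ‖G‖,
    (isCompact_closedBall (0 : W) ‖G‖).image continuous_subtype_val, ?_⟩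
  refine Filter.mem_of_superset (Metric.ball_mem_nhds (0 : H) one_pos) fun x hx => ?_
  have hx1 : ‖x‖ < 1 := by simpa [Metric.mem_ball, dist_zero_right] using hx
  refine ⟨⟨G x, LinearMap.mem_range_self _ x⟩, ?_, rfl⟩
  rw [Metric.mem_closedBall, dist_zero_right]
  calc ‖(⟨G x, LinearMap.mem_range_self _ x⟩ : W)‖ = ‖G x‖ := rfl
    _ ≤ ‖G‖ * ‖x‖ := G.le_opNorm x
    _ ≤ ‖G‖ := mul_le_of_le_one_right (norm_nonneg _) hx1.le

lemma cp1 {P : ℕ → H →L[ℂ] H}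
    (hnorm : ∀ n, ‖(1 - P n : H →L[ℂ] H)‖ ≤ 1)
    (hstrong : ∀ x : H, Tendsto (fun n => P n x) atTop (𝓝 x))
    {K : H →L[ℂ] H} (hK : IsCompactOperator ⇑K) :
    Tendsto (fun n => ‖((1 - P n) * K : H →L[ℂ] H)‖) atTop (𝓝 0) := by
  rw [Metric.tendsto_atTop]
  intro ε hε
  obtain ⟨M, hMc, hMsub⟩ := hK.image_closedBall_subset_compact 1
  have htb : TotallyBounded (⇑K '' Metric.closedBall 0 1) :=
    TotallyBounded.subset hMsub hMc.totallyBounded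
  obtain ⟨t, htfin, hcover⟩ := (Metric.totallyBounded_iff.mp htb) (ε/4) (by positivity)
  have hy : ∀ y : H, Tendsto (fun n => ‖(1 - P n : H →L[ℂ] H) y‖) atTop (𝓝 0) := by
    intro y
    have h0 : Tendsto (fun n => y - P n y) atTop (𝓝 (y - y)) :=
      (tendsto_const_nhds.sub (hstrong y))
    rw [sub_self] at h0
    have := h0.norm
    rw [norm_zero] at this
    have heq : (fun n => ‖(1 - P n : H →L[ℂ] H) y‖) = fun n => ‖y - P n y‖ := by
      funext n
      simp [ContinuousLinearMap.sub_apply]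
    rw [heq]
    exact this
  have hev : ∀ᶠ n in atTop, ∀ y ∈ t, ‖(1 - P n : H →L[ℂ] H) y‖ < ε/4 := by
    rw [Filter.eventually_all_finite htfin]
    intro y _
    exact (hy y).eventually_lt_const (by positivity)
  obtain ⟨N, hN⟩ := Filter.eventually_atTop.mp hev
  refine ⟨N, fun n hn => ?_⟩
  rw [Real.dist_eq, sub_zero, abs_of_nonneg (norm_nonneg _)]
  have hb : ∀ x : H, ‖(((1 - P n) * K : H →L[ℂ] H)) x‖ ≤ (ε/2) * ‖x‖ := by
    intro x
    rcases eq_or_ne x 0 with rfl | hx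
    · simp
    · have hxn : ‖x‖ ≠ 0 := norm_ne_zero_iff.mpr hx
      set u : H := ((‖x‖⁻¹ : ℝ) : ℂ) • x with hu
      have hun : ‖u‖ = 1 := by
        rw [hu, norm_smul]
        simp [abs_of_nonneg (inv_nonneg.mpr (norm_nonneg x)), inv_mul_cancel₀ hxn]
      have hxu : x = ((‖x‖ : ℝ) : ℂ) • u := by
        rw [hu, smul_smul]
        rw [show ((‖x‖ : ℝ) : ℂ) * ((‖x‖⁻¹ : ℝ) : ℂ) = 1 by
          push_cast
          exact mul_inv_cancel₀ (by exact_mod_cast hxn)]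
        rw [one_smul]
      have hKu : K u ∈ ⇑K '' Metric.closedBall 0 1 :=
        ⟨u, by simp [Metric.mem_closedBall, dist_zero_right, hun], rfl⟩
      obtain ⟨y, hyt, hmem⟩ := Set.mem_iUnion₂.mp (hcover hKu)
      have hdist : ‖K u - y‖ < ε/4 := by
        rw [← dist_eq_norm]
        exact hmem
      have hbu : ‖(((1 - P n) * K : H →L[ℂ] H)) u‖ ≤ ε/2 := by
        rw [ContinuousLinearMap.mul_apply]
        calc ‖(1 - P n : H →L[ℂ] H) (K u)‖
            = ‖(1 - P n : H →L[ℂ] H) (K u - y) + (1 - P n : H →L[ℂ] H) y‖ := by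
              rw [← map_add, sub_add_cancel]
          _ ≤ ‖(1 - P n : H →L[ℂ] H) (K u - y)‖ + ‖(1 - P n : H →L[ℂ] H) y‖ := norm_add_le _ _
          _ ≤ ‖(1 - P n : H →L[ℂ] H)‖ * ‖K u - y‖ + ε/4 := by
              have := hN n hn y hyt
              gcongr
              exact (1 - P n : H →L[ℂ] H).le_opNorm _
          _ ≤ 1 * (ε/4) + ε/4 := by
              gcongr
              exact hnorm n
          _ = ε/2 := by ring
      calc ‖(((1 - P n) * K : H →L[ℂ] H)) x‖
          = ‖x‖ * ‖(((1 - P n) * K : H →L[ℂ] H)) u‖ := by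
            nth_rewrite 1 [hxu]
            rw [map_smul, norm_smul]
            congr 1
            simp [abs_of_nonneg (norm_nonneg x)]
        _ ≤ ‖x‖ * (ε/2) := mul_le_mul_of_nonneg_left hbu (norm_nonneg x)
        _ = (ε/2) * ‖x‖ := mul_comm _ _
  have := ContinuousLinearMap.opNorm_le_bound _ (by positivity) hb
  linarith

lemma cp2 {P : ℕ → H →L[ℂ] H}
    (hproj : ∀ n, IsIdempotentElem (P n) ∧ IsSelfAdjoint (P n))
    (hfd : ∀ n, FiniteDimensional ℂ (LinearMap.range (P n : H →ₗ[ℂ] H)))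
    (hnorm : ∀ n, ‖(1 - P n : H →L[ℂ] H)‖ ≤ 1)
    (hstrong : ∀ x : H, Tendsto (fun n => P n x) atTop (𝓝 x))
    {K : H →L[ℂ] H} (hK : IsCompactOperator ⇑K) :
    Tendsto (fun n => ‖(K * (1 - P n) : H →L[ℂ] H)‖) atTop (𝓝 0) := by
  rw [Metric.tendsto_atTop]
  intro ε hε
  have h1 := cp1 hnorm hstrong hK
  obtain ⟨m, hm⟩ := Metric.tendsto_atTop.mp h1 (ε/3) (by positivity)
  have hmK : ‖((1 - P m) * K : H →L[ℂ] H)‖ < ε/3 := by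
    have := hm m le_rfl
    rwa [Real.dist_eq, sub_zero, abs_of_nonneg (norm_nonneg _)] at this
  set G : H →L[ℂ] H := (star K) * (P m) with hG
  have hle : LinearMap.range (G : H →ₗ[ℂ] H) ≤
      Submodule.map ((star K : H →L[ℂ] H) : H →ₗ[ℂ] H) (LinearMap.range (P m : H →ₗ[ℂ] H)) := by
    rintro x ⟨y, rfl⟩
    exact ⟨P m y, LinearMap.mem_range_self _ y, rfl⟩
  haveI := hfd m
  have hGfd : FiniteDimensional ℂ (LinearMap.range (G : H →ₗ[ℂ] H)) :=
    Submodule.finiteDimensional_of_le hle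
  have hGcomp : IsCompactOperator ⇑G := finrank_compact G hGfd
  have h2 := cp1 hnorm hstrong hGcomp
  obtain ⟨N, hN⟩ := Metric.tendsto_atTop.mp h2 (ε/3) (by positivity)
  refine ⟨N, fun n hn => ?_⟩
  rw [Real.dist_eq, sub_zero, abs_of_nonneg (norm_nonneg _)]
  have hid : (K * (1 - P n) : H →L[ℂ] H) =
      ((1 - P m) * K) * (1 - P n) + (P m * K) * (1 - P n) := by noncomm_ring
  have hstar : ‖((P m * K) * (1 - P n) : H →L[ℂ] H)‖ = ‖((1 - P n) * G : H →L[ℂ] H)‖ := by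
    rw [← norm_star]
    congr 1
    rw [star_mul, star_mul, (hproj m).2.star_eq]
    have hsa : IsSelfAdjoint (1 - P n : H →L[ℂ] H) :=
      (IsSelfAdjoint.one (H →L[ℂ] H)).sub (hproj n).2
    rw [hsa.star_eq, hG]
  have hNn : ‖((1 - P n) * G : H →L[ℂ] H)‖ < ε/3 := by
    have := hN n hn
    rwa [Real.dist_eq, sub_zero, abs_of_nonneg (norm_nonneg _)] at this
  calc ‖(K * (1 - P n) : H →L[ℂ] H)‖
      ≤ ‖(((1 - P m) * K) * (1 - P n) : H →L[ℂ] H)‖ +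
        ‖((P m * K) * (1 - P n) : H →L[ℂ] H)‖ := by rw [hid]; exact norm_add_le _ _
    _ ≤ ‖((1 - P m) * K : H →L[ℂ] H)‖ * ‖(1 - P n : H →L[ℂ] H)‖ +
        ‖((1 - P n) * G : H →L[ℂ] H)‖ := by
        rw [hstar]
        gcongr
        exact norm_mul_le _ _
    _ ≤ (ε/3) * 1 + ε/3 :=
        add_le_add (mul_le_mul hmK.le (hnorm n) (norm_nonneg _) (by positivity)) hNn.le
    _ < ε := by linarith

/-- If `(P_n)` is a proper Følner sequence for `T`, then for every compact operator `K`
one has `‖K P_n - P_n K‖ → 0` and `(P_n)` is a proper Følner sequence for `T + K`. -/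
theorem statement_0 [SeparableSpace H] (T : H →L[ℂ] H) (P : ℕ → H →L[ℂ] H)
    (hP : IsProperFolnerSeq T P) (K : H →L[ℂ] H) (hK : IsCompactOperator (⇑K)) :
    Tendsto (fun n => ‖K * P n - P n * K‖) atTop (nhds 0) ∧
    IsProperFolnerSeq (T + K) P := by
  obtain ⟨hfr, hposit, hstrong, hphi⟩ := hP
  have hproj : ∀ n, IsIdempotentElem (P n) ∧ IsSelfAdjoint (P n) := fun n =>
    ⟨(hfr n).1.1, (hfr n).1.2⟩
  have hfd : ∀ n, FiniteDimensional ℂ (LinearMap.range (P n : H →ₗ[ℂ] H)) := fun n => (hfr n).2.2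
  have hnorm1 : ∀ n, ‖(1 - P n : H →L[ℂ] H)‖ ≤ 1 := fun n =>
    proj_norm_le (hproj n).1.one_sub ((IsSelfAdjoint.one (H →L[ℂ] H)).sub (hproj n).2)
  have hA := cp1 hnorm1 hstrong hK
  have hB := cp2 hproj hfd hnorm1 hstrong hK
  have hAB : Tendsto (fun n => ‖((1 - P n) * K : H →L[ℂ] H)‖ +
      ‖(K * (1 - P n) : H →L[ℂ] H)‖) atTop (nhds 0) := by
    simpa using hA.add hB
  have hfirst : Tendsto (fun n => ‖K * P n - P n * K‖) atTop (nhds 0) := by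
    refine squeeze_zero (fun n => norm_nonneg _) (fun n => ?_) hAB
    have hid : K * P n - P n * K = (1 - P n) * K - K * (1 - P n) := by noncomm_ring
    rw [hid]
    exact norm_sub_le _ _
  refine ⟨hfirst, hfr, hposit, hstrong, ?_⟩
  have hupper : Tendsto (fun n => Real.sqrt 2 * phi T (P n) +
      2 * (‖((1 - P n) * K : H →L[ℂ] H)‖ + ‖(K * (1 - P n) : H →L[ℂ] H)‖))
      atTop (nhds 0) := by
    simpa using (hphi.const_mul (Real.sqrt 2)).add (hAB.const_mul 2)
  refine squeeze_zero (fun n => ?_) (fun n => ?_) hupper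
  · exact div_nonneg (Real.sqrt_nonneg _) (Real.sqrt_nonneg _)
  · haveI := hfd n
    exact phi_bound (hproj n).1 (hproj n).2 (hfr n).2.1 T K
end
end

section
/- Let s ∈ ℕ and let P_1, ..., P_s be nonzero finite-rank orthogonal projections on a complex separable Hilbert space H such that ‖P_j P_k‖ ≤ δ := 1/(3s³) for all indices j ≠ k. Then the ranges of the projections P_j are linearly independent subspaces (i.e., their sum is direct), and P_1 + ... + P_s ≥ (1/2)(P_1 ∨ ... ∨ P_s) in the sense of self-adjoint operators, where P_1 ∨ ... ∨ P_s denotes the orthogonal projection onto the (finite-dimensional, hence closed) subspace P_1H + ... + P_sH. -/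
noncomputable section

open Filter Topology TopologicalSpace

variable {H : Type*} [NormedAddCommGroup H] [InnerProductSpace ℂ H] [CompleteSpace H]

local notation "⟪" x ", " y "⟫" => @inner ℂ _ _ x y

section Aux6

/-- An idempotent fixes its range. -/
lemma aux6_apply_of_mem {R : H →L[ℂ] H} (hR : IsIdempotentElem R) {f : H}
    (hf : f ∈ LinearMap.range (R : H →ₗ[ℂ] H)) : R f = f := by
  obtain ⟨y, rfl⟩ := hf
  conv_rhs => rw [← hR]
  rfl

/-- Inner product identity for orthogonal projections. -/
lemma aux6_inner_proj {R : H →L[ℂ] H} (hR : IsOrthProjection R) (x : H) :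
    (⟪R x, x⟫ : ℂ) = ((‖R x‖ : ℂ)) ^ 2 := by
  have h1 : R x = R (R x) := by
    conv_lhs => rw [← hR.1]
    rfl
  calc (⟪R x, x⟫ : ℂ) = ⟪R (R x), x⟫ := by rw [← h1]
    _ = ⟪R x, R x⟫ := hR.2.isSymmetric (R x) x
    _ = ((‖R x‖ : ℂ)) ^ 2 := inner_self_eq_norm_sq_to_K (R x)

end Aux6

set_option maxHeartbeats 1000000

/-- If `P_1, …, P_s` are nonzero finite-rank orthogonal projections with
`‖P_j P_k‖ ≤ 1/(3s³)` for `j ≠ k`, then their ranges are linearly independent and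
`P_1 + ⋯ + P_s ≥ (1/2)(P_1 ∨ ⋯ ∨ P_s)`. -/
theorem statement_6 [SeparableSpace H] (s : ℕ) (P : Fin s → H →L[ℂ] H)
    (hP : ∀ j, IsFinRankProj (P j))
    (hsmall : ∀ j k, j ≠ k → ‖P j * P k‖ ≤ 1 / (3 * (s : ℝ) ^ 3)) :
    ((∀ f : Fin s → H, (∀ j, f j ∈ LinearMap.range (P j : H →ₗ[ℂ] H)) →
        ∑ j, f j = 0 → ∀ j, f j = 0) ∧
      (∀ Q : H →L[ℂ] H, IsOrthProjection Q →
        LinearMap.range (Q : H →ₗ[ℂ] H) = (⨆ j, LinearMap.range (P j : H →ₗ[ℂ] H)) →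
        ((∑ j, P j) - ((1 : ℂ) / 2) • Q).IsPositive)) := by
  classical
  set δ : ℝ := 1 / (3 * (s : ℝ) ^ 3) with hδdef
  have hδ0 : 0 ≤ δ := by positivity
  have hδs : δ * s ≤ 1 / 3 := by
    rcases Nat.eq_zero_or_pos s with h | h
    · subst h; simp [hδdef]
    · have h1 : (1 : ℝ) ≤ (s : ℝ) := by exact_mod_cast h
      rw [hδdef, div_mul_eq_mul_div, one_mul, div_le_div_iff₀ (by positivity) (by norm_num)]
      have h2 : (0:ℝ) ≤ (s:ℝ) - 1 := by linarith
      have h3 : (0:ℝ) ≤ (s:ℝ) := by linarith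
      have h4 : (0:ℝ) ≤ (s:ℝ) + 1 := by linarith
      nlinarith [mul_nonneg (mul_nonneg h2 h3) h4]
  have hcross : ∀ (j k : Fin s), j ≠ k → ∀ g : H, g ∈ LinearMap.range (P j : H →ₗ[ℂ] H) →
      ‖P k g‖ ≤ δ * ‖g‖ := by
    intro j k hjk g hg
    have h1 : P k g = (P k * P j) g := by
      rw [ContinuousLinearMap.mul_apply, aux6_apply_of_mem (hP j).1.1 hg]
    rw [h1]
    calc ‖(P k * P j) g‖ ≤ ‖P k * P j‖ * ‖g‖ := (P k * P j).le_opNorm g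
      _ ≤ δ * ‖g‖ :=
        mul_le_mul_of_nonneg_right (hsmall k j (Ne.symm hjk)) (norm_nonneg g)
  -- cross inner product bound
  have hcrossInner : ∀ (f : Fin s → H), (∀ j, f j ∈ LinearMap.range (P j : H →ₗ[ℂ] H)) →
      ∀ j k, j ≠ k → ‖(⟪f j, f k⟫ : ℂ)‖ ≤ δ * (‖f j‖ * ‖f k‖) := by
    intro f hf j k hjk
    have h1 : (⟪f j, f k⟫ : ℂ) = ⟪P k (f j), f k⟫ := by
      conv_lhs => rw [← aux6_apply_of_mem (hP k).1.1 (hf k)]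
      exact ((hP k).1.2.isSymmetric (f j) (f k)).symm
    rw [h1]
    calc ‖(⟪P k (f j), f k⟫ : ℂ)‖ ≤ ‖P k (f j)‖ * ‖f k‖ := norm_inner_le_norm _ _
      _ ≤ δ * ‖f j‖ * ‖f k‖ :=
        mul_le_mul_of_nonneg_right (hcross j k hjk _ (hf j)) (norm_nonneg _)
      _ = δ * (‖f j‖ * ‖f k‖) := by ring
  constructor
  · -- linear independence
    intro f hf hsum j0
    have hs1 : (1 : ℝ) ≤ (s : ℝ) := by exact_mod_cast j0.pos
    set a : Fin s → ℝ := fun j => ‖f j‖ with ha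
    set S : ℝ := ∑ j, a j with hSdef
    have hbound : ∀ k, a k ≤ δ * S := by
      intro k
      have h3 : (∑ j, P k (f j)) = 0 := by
        rw [← map_sum, hsum, map_zero]
      have h4 : P k (f k) + ∑ j ∈ Finset.univ.erase k, P k (f j) = 0 :=
        (Finset.add_sum_erase _ (fun j => P k (f j)) (Finset.mem_univ k)).trans h3
      have h5 : f k = -∑ j ∈ Finset.univ.erase k, P k (f j) := by
        rw [← aux6_apply_of_mem (hP k).1.1 (hf k)]
        exact eq_neg_of_add_eq_zero_left h4
      calc a k = ‖∑ j ∈ Finset.univ.erase k, P k (f j)‖ := by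
            rw [show a k = ‖f k‖ from rfl, h5, norm_neg]
        _ ≤ ∑ j ∈ Finset.univ.erase k, ‖P k (f j)‖ := norm_sum_le _ _
        _ ≤ ∑ j ∈ Finset.univ.erase k, δ * a j := by
            refine Finset.sum_le_sum fun j hj => ?_
            exact hcross j k (Finset.mem_erase.mp hj).1 _ (hf j)
        _ = δ * ∑ j ∈ Finset.univ.erase k, a j := by rw [Finset.mul_sum]
        _ ≤ δ * S := by
            refine mul_le_mul_of_nonneg_left ?_ hδ0
            exact Finset.sum_le_sum_of_subset_of_nonneg (Finset.subset_univ _)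
              (fun i _ _ => norm_nonneg _)
    have hSS : S ≤ δ * s * S := by
      calc S = ∑ k, a k := rfl
        _ ≤ ∑ _k : Fin s, δ * S := Finset.sum_le_sum fun k _ => hbound k
        _ = δ * s * S := by
            rw [Finset.sum_const, Finset.card_univ, Fintype.card_fin, nsmul_eq_mul]; ring
    have hS0 : 0 ≤ S := Finset.sum_nonneg fun j _ => norm_nonneg _
    have hSz : S ≤ 0 := by nlinarith
    have haj : a j0 ≤ 0 := by
      have := Finset.single_le_sum (f := a) (fun i _ => norm_nonneg (f i)) (Finset.mem_univ j0)
      linarith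
    have : ‖f j0‖ = 0 := le_antisymm haj (norm_nonneg _)
    exact norm_eq_zero.mp this
  · -- positivity
    intro Q hQ hrange
    have hQPop : ∀ j, P j * Q = P j := by
      intro j
      have h1 : Q * P j = P j := by
        ext x
        refine aux6_apply_of_mem hQ.1 ?_
        rw [hrange]
        exact (le_iSup (fun j => LinearMap.range (P j : H →ₗ[ℂ] H)) j) ⟨x, rfl⟩
      have h2 := congrArg star h1
      rwa [star_mul, (hP j).1.2.star_eq, hQ.2.star_eq] at h2
    constructor
    · -- self-adjoint
      refine (show IsSelfAdjoint ((∑ j, P j) - ((1 : ℂ) / 2) • Q) from IsSelfAdjoint.sub ?_ ?_).isSymmetric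
      · rw [IsSelfAdjoint, star_sum]
        exact Finset.sum_congr rfl fun j _ => (hP j).1.2.star_eq
      · rw [IsSelfAdjoint, star_smul, hQ.2.star_eq, star_div₀]
        norm_num [Complex.ext_iff, Complex.star_def]
    · intro x
      rw [ContinuousLinearMap.reApplyInnerSelf_apply]
      set y : H := Q x with hy
      -- decompose y
      have hymem : y ∈ ⨆ j, LinearMap.range (P j : H →ₗ[ℂ] H) := by
        rw [← hrange]; exact ⟨x, rfl⟩
      obtain ⟨F, hFmem, hFsum⟩ := (Submodule.mem_iSup_iff_exists_finsupp _ _).mp hymem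
      set f : Fin s → H := fun j => F j with hf
      have hfmem : ∀ j, f j ∈ LinearMap.range (P j : H →ₗ[ℂ] H) := fun j => hFmem j
      have hsumf : ∑ j, f j = y := by
        rw [← hFsum, Finsupp.sum_fintype _ _ (fun _ => rfl)]
      have hPxy : ∀ j, P j x = P j y := by
        intro j
        conv_lhs => rw [← hQPop j]
        rfl
      set a : Fin s → ℝ := fun j => ‖f j‖ with ha
      set b : Fin s → ℝ := fun j => ‖P j x‖ with hb
      set N : ℝ := ∑ j, (a j) ^ 2 with hN
      set B2 : ℝ := ∑ j, (b j) ^ 2 with hB2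
      have hN0 : 0 ≤ N := Finset.sum_nonneg fun j _ => sq_nonneg _
      have hB20 : 0 ≤ B2 := Finset.sum_nonneg fun j _ => sq_nonneg _
      -- step 1: ‖y‖² ≤ ∑ b a
      have hstep1 : ‖y‖ ^ 2 ≤ ∑ j, b j * a j := by
        have h1 : ((‖y‖ : ℂ)) ^ 2 = ∑ j, (⟪P j y, f j⟫ : ℂ) := by
          calc ((‖y‖ : ℂ)) ^ 2 = ⟪y, y⟫ := (inner_self_eq_norm_sq_to_K y).symm
            _ = ⟪y, ∑ j, f j⟫ := by rw [hsumf]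
            _ = ∑ j, (⟪y, f j⟫ : ℂ) := inner_sum _ _ _
            _ = ∑ j, (⟪P j y, f j⟫ : ℂ) := by
                refine Finset.sum_congr rfl fun j _ => ?_
                conv_lhs => rw [← aux6_apply_of_mem (hP j).1.1 (hfmem j)]
                exact ((hP j).1.2.isSymmetric y (f j)).symm
        have h2 : ‖y‖ ^ 2 = ∑ j, ((⟪P j y, f j⟫ : ℂ)).re := by
          have := congrArg Complex.re h1
          simpa [Complex.re_sum, ← Complex.ofReal_pow] using this
        rw [h2]
        refine Finset.sum_le_sum fun j _ => ?_
        calc ((⟪P j y, f j⟫ : ℂ)).re ≤ ‖(⟪P j y, f j⟫ : ℂ)‖ := Complex.re_le_norm _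
          _ ≤ ‖P j y‖ * ‖f j‖ := norm_inner_le_norm _ _
          _ = b j * a j := by simp only [hb, ha]; rw [hPxy j]
      -- step 2: N ≤ 2‖y‖²
      have hstep2 : N ≤ 2 * ‖y‖ ^ 2 := by
        have h1 : ((‖y‖ : ℂ)) ^ 2 = ∑ j, ∑ k, (⟪f j, f k⟫ : ℂ) := by
          calc ((‖y‖ : ℂ)) ^ 2 = ⟪y, y⟫ := (inner_self_eq_norm_sq_to_K y).symm
            _ = ⟪∑ j, f j, ∑ k, f k⟫ := by rw [hsumf]
            _ = ∑ j, (⟪f j, ∑ k, f k⟫ : ℂ) := sum_inner _ _ _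
            _ = ∑ j, ∑ k, (⟪f j, f k⟫ : ℂ) :=
                Finset.sum_congr rfl fun j _ => inner_sum _ _ _
        have h2 : ‖y‖ ^ 2 = ∑ j, ∑ k, ((⟪f j, f k⟫ : ℂ)).re := by
          have := congrArg Complex.re h1
          simpa [Complex.re_sum, ← Complex.ofReal_pow] using this
        have hS : (∑ j, a j) ^ 2 ≤ (s : ℝ) * N := by
          have := sq_sum_le_card_mul_sum_sq (s := (Finset.univ : Finset (Fin s))) (f := a)
          simpa [hN] using this
        have h3 : ∀ j, (a j) ^ 2 - δ * a j * (∑ k, a k) ≤ ∑ k, ((⟪f j, f k⟫ : ℂ)).re := by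
          intro j
          have h4 : ∑ k, ((⟪f j, f k⟫ : ℂ)).re
              = ((⟪f j, f j⟫ : ℂ)).re + ∑ k ∈ Finset.univ.erase j, ((⟪f j, f k⟫ : ℂ)).re :=
            (Finset.add_sum_erase _ (fun k => ((⟪f j, f k⟫ : ℂ)).re)
              (Finset.mem_univ j)).symm
          have h5 : ((⟪f j, f j⟫ : ℂ)).re = (a j) ^ 2 := by
            have := congrArg Complex.re (inner_self_eq_norm_sq_to_K (𝕜 := ℂ) (f j))
            rw [this, ← RCLike.ofReal_pow]; exact RCLike.ofReal_re (K := ℂ) _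
          have h6 : ∀ k ∈ Finset.univ.erase j, -(δ * (a j * a k)) ≤ ((⟪f j, f k⟫ : ℂ)).re := by
            intro k hk
            have hne : j ≠ k := (Finset.mem_erase.mp hk).1.symm
            have habs := hcrossInner f hfmem j k hne
            have hre : |((⟪f j, f k⟫ : ℂ)).re| ≤ ‖(⟪f j, f k⟫ : ℂ)‖ :=
              Complex.abs_re_le_norm _
            have := abs_le.mp hre
            linarith [this.1]
          have h7 : -(δ * a j * (∑ k ∈ Finset.univ.erase j, a k))
              ≤ ∑ k ∈ Finset.univ.erase j, ((⟪f j, f k⟫ : ℂ)).re := by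
            calc -(δ * a j * (∑ k ∈ Finset.univ.erase j, a k))
                = ∑ k ∈ Finset.univ.erase j, -(δ * (a j * a k)) := by
                  rw [Finset.mul_sum, ← Finset.sum_neg_distrib]
                  exact Finset.sum_congr rfl fun k _ => by ring
              _ ≤ _ := Finset.sum_le_sum h6
          have h8 : ∑ k ∈ Finset.univ.erase j, a k ≤ ∑ k, a k :=
            Finset.sum_le_sum_of_subset_of_nonneg (Finset.subset_univ _)
              (fun i _ _ => norm_nonneg _)
          have h9 : 0 ≤ a j := norm_nonneg _
          rw [h4, h5]
          nlinarith [h7, mul_nonneg (mul_nonneg hδ0 h9) (sub_nonneg.mpr h8)]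
        have h10 : N - δ * (∑ j, a j) ^ 2 ≤ ‖y‖ ^ 2 := by
          rw [h2]
          calc N - δ * (∑ j, a j) ^ 2
              = ∑ j, ((a j) ^ 2 - δ * a j * (∑ k, a k)) := by
                rw [Finset.sum_sub_distrib]
                congr 1
                rw [← Finset.sum_mul, ← Finset.mul_sum]
                ring
            _ ≤ ∑ j, ∑ k, ((⟪f j, f k⟫ : ℂ)).re := Finset.sum_le_sum fun j _ => h3 j
        nlinarith [mul_le_mul_of_nonneg_left hS hδ0]
      -- step 3: Cauchy–Schwarz
      have hstep3 : (∑ j, b j * a j) ^ 2 ≤ B2 * N :=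
        Finset.sum_mul_sq_le_sq_mul_sq _ _ _
      -- combine
      have hkey : 1 / 2 * ‖y‖ ^ 2 ≤ B2 := by
        rcases eq_or_lt_of_le (sq_nonneg ‖y‖) with hu | hu
        · rw [← hu]; linarith
        · have hT0 : (0:ℝ) ≤ ∑ j, b j * a j :=
            Finset.sum_nonneg fun j _ => mul_nonneg (norm_nonneg _) (norm_nonneg _)
          nlinarith [hstep1, hstep2, hstep3, hu, hT0, hB20, hN0]
      -- now compute the inner product
      have hinner : (⟪((∑ j, P j) - ((1 : ℂ) / 2) • Q) x, x⟫ : ℂ)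
          = ((∑ j, (b j) ^ 2 - 1 / 2 * ‖y‖ ^ 2 : ℝ) : ℂ) := by
        rw [ContinuousLinearMap.sub_apply, ContinuousLinearMap.smul_apply,
          ContinuousLinearMap.sum_apply, inner_sub_left, sum_inner, inner_smul_left]
        have hc : (starRingEnd ℂ) ((1 : ℂ) / 2) = (1 : ℂ) / 2 := by
          rw [map_div₀]; norm_num [Complex.ext_iff]
        rw [hc, aux6_inner_proj hQ x]
        have hterms : ∀ j, (⟪P j x, x⟫ : ℂ) = ((‖P j x‖ : ℂ)) ^ 2 :=
          fun j => aux6_inner_proj (hP j).1 x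
        rw [Finset.sum_congr rfl fun j _ => hterms j]
        push_cast [hb, hy]
        ring
      rw [hinner]
      simp only [RCLike.re_to_complex, Complex.ofReal_re]
      rw [← hB2]
      linarith
end
end

section
/- Let P and Q be nonzero finite-rank orthogonal projections on a complex separable Hilbert space H and let L ∈ L(H). Then |φ(L,P) − φ(L,Q)| ≤ 4‖L‖ · ‖P − Q‖₂ / max(‖P‖₂, ‖Q‖₂). -/
noncomputable section

open Filter Topology TopologicalSpace

variable {H : Type*} [NormedAddCommGroup H] [InnerProductSpace ℂ H] [CompleteSpace H]

section AuxHS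
open ContinuousLinearMap

lemma re_inner_mul (x v : H) : Complex.re ((inner ℂ x v : ℂ) * (inner ℂ v x : ℂ)) = ‖(inner ℂ x v : ℂ)‖^2 := by
  rw [← inner_conj_symm v x, Complex.mul_conj]
  simp only [Complex.normSq_eq_norm_sq, ← Complex.ofReal_pow, Complex.ofReal_re]

lemma parseval_hb {ι : Type*} (b : HilbertBasis ι ℂ H) (x : H) :
    HasSum (fun i => ‖(inner ℂ x (b i) : ℂ)‖ ^ 2) (‖x‖ ^ 2) := by
  have h := (HilbertBasis.hasSum_inner_mul_inner b x x).mapL Complex.reCLM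
  have e2 : Complex.reCLM (inner ℂ x x : ℂ) = ‖x‖^2 := by
    simpa using inner_self_eq_norm_sq (𝕜 := ℂ) x
  rw [e2] at h
  convert h using 2 with i
  exact (re_inner_mul x (b i)).symm

lemma parseval_fin {n : ℕ} (c : OrthonormalBasis (Fin n) ℂ H) (x : H) :
    ‖x‖ ^ 2 = ∑ k, ‖(inner ℂ x (c k) : ℂ)‖ ^ 2 := by
  have h := congrArg Complex.re (OrthonormalBasis.sum_inner_mul_inner c x x)
  rw [Complex.re_sum] at h
  rw [show (‖x‖^2 : ℝ) = Complex.re (inner ℂ x x : ℂ) from (inner_self_eq_norm_sq (𝕜 := ℂ) x).symm, ← h]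
  exact Finset.sum_congr rfl fun k _ => re_inner_mul x (c k)

lemma parseval_sub (V : Submodule ℂ H) [FiniteDimensional ℂ V] (x : H) (hx : x ∈ V) :
    ‖x‖ ^ 2 = ∑ k, ‖(inner ℂ x ((stdOrthonormalBasis ℂ V k : V) : H) : ℂ)‖ ^ 2 := by
  have h := parseval_fin (stdOrthonormalBasis ℂ V) (⟨x, hx⟩ : V)
  simpa [Submodule.norm_coe, Submodule.coe_inner] using h

lemma hs_hasSum (A : H →L[ℂ] H) (V : Submodule ℂ H) [FiniteDimensional ℂ V]
    (hA : ∀ x, A x ∈ V) :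
    HasSum (fun i : (exists_hilbertBasis ℂ H).choose => ‖A (i : H)‖ ^ 2)
      (∑ k, ‖(adjoint A) ((stdOrthonormalBasis ℂ V k : V) : H)‖ ^ 2) := by
  obtain ⟨b, hb⟩ := (exists_hilbertBasis ℂ H).choose_spec
  have h2 : ∀ k, HasSum (fun i : (exists_hilbertBasis ℂ H).choose =>
      ‖(inner ℂ ((i : H)) ((adjoint A) ((stdOrthonormalBasis ℂ V k : V) : H)) : ℂ)‖ ^ 2)
      (‖(adjoint A) ((stdOrthonormalBasis ℂ V k : V) : H)‖ ^ 2) := by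
    intro k
    have h := parseval_hb b ((adjoint A) ((stdOrthonormalBasis ℂ V k : V) : H))
    convert h using 2 with i
    rw [hb, norm_inner_symm]
  have hsum := hasSum_sum (s := Finset.univ) fun k _ => h2 k
  convert hsum using 1
  funext i
  rw [parseval_sub V (A i) (hA i)]
  exact Finset.sum_congr rfl fun k _ => by rw [← adjoint_inner_right]

lemma hsNorm_eq (A : H →L[ℂ] H) (V : Submodule ℂ H) [FiniteDimensional ℂ V]
    (hA : ∀ x, A x ∈ V) :
    hsNorm A = Real.sqrt (∑ k, ‖(adjoint A) ((stdOrthonormalBasis ℂ V k : V) : H)‖ ^ 2) := by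
  rw [hsNorm, (hs_hasSum A V hA).tsum_eq]

lemma hsNorm_nonneg (A : H →L[ℂ] H) : 0 ≤ hsNorm A := Real.sqrt_nonneg _

lemma hsNorm_add_le (A B : H →L[ℂ] H) (V : Submodule ℂ H) [FiniteDimensional ℂ V]
    (hA : ∀ x, A x ∈ V) (hB : ∀ x, B x ∈ V) :
    hsNorm (A + B) ≤ hsNorm A + hsNorm B := by
  have hAB : ∀ x, (A + B) x ∈ V := fun x => by
    simpa using add_mem (hA x) (hB x)
  set f : Fin (Module.finrank ℂ V) → H := fun k => ((stdOrthonormalBasis ℂ V k : V) : H) with hf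
  set u : EuclideanSpace ℝ (Fin (Module.finrank ℂ V)) :=
    (WithLp.equiv 2 _).symm (fun k => ‖(adjoint A) (f k)‖) with hu
  set v : EuclideanSpace ℝ (Fin (Module.finrank ℂ V)) :=
    (WithLp.equiv 2 _).symm (fun k => ‖(adjoint B) (f k)‖) with hv
  have hnu : hsNorm A = ‖u‖ := by
    rw [hsNorm_eq A V hA, EuclideanSpace.norm_eq]
    congr 1
    refine Finset.sum_congr rfl fun k _ => ?_
    simp [hu, hf]
  have hnv : hsNorm B = ‖v‖ := by
    rw [hsNorm_eq B V hB, EuclideanSpace.norm_eq]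
    congr 1
    refine Finset.sum_congr rfl fun k _ => ?_
    simp [hv, hf]
  have step1 : hsNorm (A + B) ≤ ‖u + v‖ := by
    rw [hsNorm_eq (A + B) V hAB, EuclideanSpace.norm_eq]
    apply Real.sqrt_le_sqrt
    refine Finset.sum_le_sum fun k _ => ?_
    have h1 : ‖(adjoint (A + B)) (f k)‖ ≤ ‖(adjoint A) (f k)‖ + ‖(adjoint B) (f k)‖ := by
        rw [map_add, ContinuousLinearMap.add_apply]
        exact norm_add_le _ _
    have h2 : ‖(u + v) k‖ = ‖(adjoint A) (f k)‖ + ‖(adjoint B) (f k)‖ := by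
        have : (u + v) k = ‖(adjoint A) (f k)‖ + ‖(adjoint B) (f k)‖ := rfl
        rw [this, Real.norm_eq_abs, abs_of_nonneg (by positivity)]
    rw [h2]
    exact pow_le_pow_left₀ (norm_nonneg _) h1 2
  calc hsNorm (A + B) ≤ ‖u + v‖ := step1
    _ ≤ ‖u‖ + ‖v‖ := norm_add_le u v
    _ = hsNorm A + hsNorm B := by rw [hnu, hnv]

lemma hsNorm_neg (A : H →L[ℂ] H) : hsNorm (-A) = hsNorm A := by
  unfold hsNorm
  simp

lemma hsNorm_comp_le (L A : H →L[ℂ] H) (V : Submodule ℂ H) [FiniteDimensional ℂ V]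
    (hA : ∀ x, A x ∈ V) : hsNorm (L * A) ≤ ‖L‖ * hsNorm A := by
  have hLA : ∀ x, (L * A) x ∈ Submodule.map (L : H →ₗ[ℂ] H) V := fun x =>
    ⟨A x, hA x, rfl⟩
  have h1 := hs_hasSum A V hA
  have h2 := hs_hasSum (L * A) _ hLA
  unfold hsNorm
  have hle : (∑' i : (exists_hilbertBasis ℂ H).choose, ‖(L * A) (i : H)‖ ^ 2) ≤
      ‖L‖ ^ 2 * ∑' i : (exists_hilbertBasis ℂ H).choose, ‖A (i : H)‖ ^ 2 := by
    rw [← tsum_mul_left]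
    refine Summable.tsum_le_tsum (fun i => ?_) h2.summable (h1.summable.mul_left _)
    rw [← mul_pow]
    exact pow_le_pow_left₀ (norm_nonneg _) (L.le_opNorm (A i)) 2
  calc Real.sqrt (∑' i : (exists_hilbertBasis ℂ H).choose, ‖(L * A) (i : H)‖ ^ 2)
      ≤ Real.sqrt (‖L‖ ^ 2 * ∑' i : (exists_hilbertBasis ℂ H).choose, ‖A (i : H)‖ ^ 2) :=
        Real.sqrt_le_sqrt hle
    _ = ‖L‖ * Real.sqrt (∑' i : (exists_hilbertBasis ℂ H).choose, ‖A (i : H)‖ ^ 2) := by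
        rw [Real.sqrt_mul (sq_nonneg _), Real.sqrt_sq (norm_nonneg _)]

lemma hsNorm_adjoint (A : H →L[ℂ] H) (V W : Submodule ℂ H)
    [FiniteDimensional ℂ V] [FiniteDimensional ℂ W]
    (hA : ∀ x, A x ∈ V) (hA' : ∀ x, (adjoint A) x ∈ W) :
    hsNorm (adjoint A) = hsNorm A := by
  rw [hsNorm_eq A V hA, hsNorm_eq (adjoint A) W hA']
  congr 1
  simp only [adjoint_adjoint]
  calc ∑ m, ‖A ((stdOrthonormalBasis ℂ W m : W) : H)‖ ^ 2
      = ∑ m, ∑ k, ‖(inner ℂ (A ((stdOrthonormalBasis ℂ W m : W) : H))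
          ((stdOrthonormalBasis ℂ V k : V) : H) : ℂ)‖ ^ 2 :=
        Finset.sum_congr rfl fun m _ => parseval_sub V _ (hA _)
    _ = ∑ k, ∑ m, ‖(inner ℂ (A ((stdOrthonormalBasis ℂ W m : W) : H))
          ((stdOrthonormalBasis ℂ V k : V) : H) : ℂ)‖ ^ 2 := Finset.sum_comm
    _ = ∑ k, ‖(adjoint A) ((stdOrthonormalBasis ℂ V k : V) : H)‖ ^ 2 := by
        refine Finset.sum_congr rfl fun k _ => ?_
        rw [parseval_sub W ((adjoint A) ((stdOrthonormalBasis ℂ V k : V) : H)) (hA' _)]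
        refine Finset.sum_congr rfl fun m _ => ?_
        rw [← adjoint_inner_right, norm_inner_symm]

lemma hsNorm_proj_pos (P : H →L[ℂ] H) (hidem : P * P = P) (hsa : adjoint P = P)
    (hne : P ≠ 0) [FiniteDimensional ℂ (LinearMap.range (P : H →ₗ[ℂ] H))] : 0 < hsNorm P := by
  have hr : ∀ x, P x ∈ LinearMap.range (P : H →ₗ[ℂ] H) := fun x => LinearMap.mem_range_self _ x
  rw [hsNorm_eq P _ hr]
  have hterm : ∀ k, ‖(adjoint P) ((stdOrthonormalBasis ℂ (LinearMap.range (P : H →ₗ[ℂ] H)) k :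
      LinearMap.range (P : H →ₗ[ℂ] H)) : H)‖ ^ 2 = 1 := by
    intro k
    rw [hsa]
    obtain ⟨u, hu⟩ := (stdOrthonormalBasis ℂ (LinearMap.range (P : H →ₗ[ℂ] H)) k).2
    have hfix : P ((stdOrthonormalBasis ℂ (LinearMap.range (P : H →ₗ[ℂ] H)) k :
        LinearMap.range (P : H →ₗ[ℂ] H)) : H) = ((stdOrthonormalBasis ℂ (LinearMap.range (P : H →ₗ[ℂ] H)) k :
        LinearMap.range (P : H →ₗ[ℂ] H)) : H) := by
      conv_lhs => rw [← hu]
      show P (P u) = _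
      rw [← ContinuousLinearMap.mul_apply, hidem]
      exact hu
    rw [hfix]
    have := (stdOrthonormalBasis ℂ (LinearMap.range (P : H →ₗ[ℂ] H))).orthonormal.1 k
    rw [Submodule.norm_coe, this, one_pow]
  rw [Finset.sum_congr rfl fun k _ => hterm k, Finset.sum_const, Finset.card_univ,
    Fintype.card_fin, nsmul_eq_mul, mul_one]
  apply Real.sqrt_pos.mpr
  have hnebot : LinearMap.range (P : H →ₗ[ℂ] H) ≠ ⊥ := by
    intro h
    apply hne
    ext x
    have : P x ∈ LinearMap.range (P : H →ₗ[ℂ] H) := LinearMap.mem_range_self _ x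
    rw [h] at this
    simpa using this
  have : 0 < Module.finrank ℂ (LinearMap.range (P : H →ₗ[ℂ] H)) := by
    rw [Module.finrank_pos_iff]
    exact Submodule.nontrivial_iff_ne_bot.mpr hnebot
  exact_mod_cast this

lemma main_aux (P Q L : H →L[ℂ] H) (hP : IsFinRankProj P) (hQ : IsFinRankProj Q)
    (hpq : hsNorm Q ≤ hsNorm P) :
    |phi L P - phi L Q| ≤ 4 * ‖L‖ * hsNorm (P - Q) / hsNorm P := by
  obtain ⟨⟨hPi, hPs⟩, hPne, hPfin⟩ := hP
  obtain ⟨⟨hQi, hQs⟩, hQne, hQfin⟩ := hQ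
  haveI := hPfin; haveI := hQfin
  have hPadj : adjoint P = P := isSelfAdjoint_iff'.mp hPs
  have hQadj : adjoint Q = Q := isSelfAdjoint_iff'.mp hQs
  set Rp := LinearMap.range (P : H →ₗ[ℂ] H) with hRp
  set Rq := LinearMap.range (Q : H →ₗ[ℂ] H) with hRq
  set V : Submodule ℂ H := (Rp ⊔ Rq) ⊔ Submodule.map (L : H →ₗ[ℂ] H) (Rp ⊔ Rq) with hV
  have hmemP : ∀ x, P x ∈ Rp ⊔ Rq := fun x => Submodule.mem_sup_left ⟨x, rfl⟩
  have hmemQ : ∀ x, Q x ∈ Rp ⊔ Rq := fun x => Submodule.mem_sup_right ⟨x, rfl⟩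
  have hmemPQ : ∀ x, (P - Q) x ∈ Rp ⊔ Rq := fun x => by
    rw [ContinuousLinearMap.sub_apply]; exact sub_mem (hmemP x) (hmemQ x)
  -- V memberships
  have hVL : ∀ y, y ∈ Rp ⊔ Rq → L y ∈ V := fun y hy =>
    Submodule.mem_sup_right (Submodule.mem_map_of_mem hy)
  have hVl : ∀ y, y ∈ Rp ⊔ Rq → y ∈ V := fun y hy => Submodule.mem_sup_left hy
  have hV1 : ∀ x, (L * P - P * L) x ∈ V := fun x => by
    simp only [ContinuousLinearMap.sub_apply, ContinuousLinearMap.mul_apply]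
    exact sub_mem (hVL _ (hmemP x)) (hVl _ (hmemP (L x)))
  have hV2 : ∀ x, (L * Q - Q * L) x ∈ V := fun x => by
    simp only [ContinuousLinearMap.sub_apply, ContinuousLinearMap.mul_apply]
    exact sub_mem (hVL _ (hmemQ x)) (hVl _ (hmemQ (L x)))
  have hV3 : ∀ x, (L * (P - Q)) x ∈ V := fun x => by
    simp only [ContinuousLinearMap.mul_apply]
    exact hVL _ (hmemPQ x)
  have hV4 : ∀ x, (-((P - Q) * L)) x ∈ V := fun x => by
    simp only [ContinuousLinearMap.neg_apply, ContinuousLinearMap.mul_apply]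
    exact neg_mem (hVl _ (hmemPQ (L x)))
  set p := hsNorm P with hp'
  set q := hsNorm Q with hq'
  set a := hsNorm (L * P - P * L) with ha'
  set b := hsNorm (L * Q - Q * L) with hb'
  set d := hsNorm (P - Q) with hd'
  have hp : 0 < p := hsNorm_proj_pos P hPi hPadj hPne
  have hq : 0 < q := hsNorm_proj_pos Q hQi hQadj hQne
  have hd : 0 ≤ d := hsNorm_nonneg _
  have hb0 : 0 ≤ b := hsNorm_nonneg _
  have hL : (0:ℝ) ≤ ‖L‖ := norm_nonneg _
  -- (1)
  have hLPQ : hsNorm (L * (P - Q)) ≤ ‖L‖ * d := hsNorm_comp_le L (P - Q) _ hmemPQ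
  -- (2) generic: for self-adjoint finite-rank R, hsNorm (R * L) ≤ ‖L‖ * hsNorm R
  have hQLadj : ∀ (R : H →L[ℂ] H) (U : Submodule ℂ H) (_ : FiniteDimensional ℂ U),
      adjoint R = R → (∀ x, R x ∈ U) → hsNorm (R * L) ≤ ‖L‖ * hsNorm R := by
    intro R U hU hR hmem
    haveI := hU
    have hadj : adjoint (R * L) = adjoint L * R := by
      rw [← star_eq_adjoint, star_mul, star_eq_adjoint, star_eq_adjoint, hR]
    have h1 : ∀ x, (R * L) x ∈ U := fun x => hmem (L x)
    have h2 : ∀ x, (adjoint (R * L)) x ∈ Submodule.map ((adjoint L : H →L[ℂ] H) :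
        H →ₗ[ℂ] H) U := fun x => by
      rw [hadj]
      exact ⟨R x, hmem x, rfl⟩
    calc hsNorm (R * L) = hsNorm (adjoint (R * L)) :=
          (hsNorm_adjoint (R * L) U _ h1 h2).symm
      _ = hsNorm (adjoint L * R) := by rw [hadj]
      _ ≤ ‖adjoint L‖ * hsNorm R := hsNorm_comp_le (adjoint L) R U hmem
      _ = ‖L‖ * hsNorm R := by rw [adjoint.norm_map]
  have hPQL : hsNorm ((P - Q) * L) ≤ ‖L‖ * d := by
    refine hQLadj (P - Q) (Rp ⊔ Rq) inferInstance ?_ hmemPQ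
    rw [map_sub, hPadj, hQadj]
  have hQL : hsNorm (Q * L) ≤ ‖L‖ * q := hQLadj Q Rq hQfin hQadj
    (fun x => LinearMap.mem_range_self _ x)
  -- (3) b ≤ 2‖L‖q
  have hb2 : b ≤ 2 * ‖L‖ * q := by
    have e : L * Q - Q * L = L * Q + (-(Q * L)) := by rw [sub_eq_add_neg]
    have hm1 : ∀ x, (L * Q) x ∈ V := fun x => hVL _ (hmemQ x)
    have hm2 : ∀ x, (-(Q * L)) x ∈ V := fun x => by
      simp only [ContinuousLinearMap.neg_apply, ContinuousLinearMap.mul_apply]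
      exact neg_mem (hVl _ (hmemQ (L x)))
    calc b = hsNorm (L * Q + (-(Q * L))) := by rw [hb', e]
      _ ≤ hsNorm (L * Q) + hsNorm (-(Q * L)) := hsNorm_add_le _ _ V hm1 hm2
      _ = hsNorm (L * Q) + hsNorm (Q * L) := by rw [hsNorm_neg]
      _ ≤ ‖L‖ * q + ‖L‖ * q := add_le_add
          (hsNorm_comp_le L Q Rq fun x => LinearMap.mem_range_self _ x) hQL
      _ = 2 * ‖L‖ * q := by ring
  -- (4) |a - b| ≤ 2‖L‖d
  have hdiff : hsNorm ((L * P - P * L) - (L * Q - Q * L)) ≤ 2 * ‖L‖ * d := by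
    have e : (L * P - P * L) - (L * Q - Q * L) = L * (P - Q) + (-((P - Q) * L)) := by
      noncomm_ring
    calc hsNorm ((L * P - P * L) - (L * Q - Q * L))
        = hsNorm (L * (P - Q) + (-((P - Q) * L))) := by rw [e]
      _ ≤ hsNorm (L * (P - Q)) + hsNorm (-((P - Q) * L)) := hsNorm_add_le _ _ V hV3 hV4
      _ = hsNorm (L * (P - Q)) + hsNorm ((P - Q) * L) := by rw [hsNorm_neg]
      _ ≤ ‖L‖ * d + ‖L‖ * d := add_le_add hLPQ hPQL
      _ = 2 * ‖L‖ * d := by ring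
  have hVdiff : ∀ x, ((L * P - P * L) - (L * Q - Q * L)) x ∈ V := fun x => by
    rw [ContinuousLinearMap.sub_apply]
    exact sub_mem (hV1 x) (hV2 x)
  have hab : |a - b| ≤ 2 * ‖L‖ * d := by
    have h1 : a ≤ hsNorm ((L * P - P * L) - (L * Q - Q * L)) + b := by
      have e : (L * P - P * L) = ((L * P - P * L) - (L * Q - Q * L)) + (L * Q - Q * L) := by
        abel
      calc a = hsNorm (((L * P - P * L) - (L * Q - Q * L)) + (L * Q - Q * L)) := by
            rw [ha', ← e]
        _ ≤ _ := hsNorm_add_le _ _ V hVdiff hV2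
    have h2 : b ≤ hsNorm ((L * P - P * L) - (L * Q - Q * L)) + a := by
      have e : (L * Q - Q * L) = (-((L * P - P * L) - (L * Q - Q * L))) + (L * P - P * L) := by
        abel
      have hVneg : ∀ x, (-((L * P - P * L) - (L * Q - Q * L))) x ∈ V := fun x => by
        rw [ContinuousLinearMap.neg_apply]
        exact neg_mem (hVdiff x)
      calc b = hsNorm ((-((L * P - P * L) - (L * Q - Q * L))) + (L * P - P * L)) := by
            rw [hb', ← e]
        _ ≤ hsNorm (-((L * P - P * L) - (L * Q - Q * L))) + a := hsNorm_add_le _ _ V hVneg hV1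
        _ = hsNorm ((L * P - P * L) - (L * Q - Q * L)) + a := by rw [hsNorm_neg]
    rw [abs_sub_le_iff]
    constructor <;> linarith
  -- (5) p ≤ q + d
  have hpd : p - q ≤ d := by
    have e : P = Q + (P - Q) := by abel
    have : p ≤ q + d := by
      calc p = hsNorm (Q + (P - Q)) := by rw [hp', ← e]
        _ ≤ q + d := hsNorm_add_le Q (P - Q) (Rp ⊔ Rq) hmemQ hmemPQ
    linarith
  -- final arithmetic
  have hphiP : phi L P = a / p := rfl
  have hphiQ : phi L Q = b / q := rfl
  rw [hphiP, hphiQ]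
  have key : a / p - b / q = (a - b) / p + b * (q - p) / (p * q) := by
    field_simp
    ring
  rw [key]
  have habs : |(a - b) / p + b * (q - p) / (p * q)| ≤
      |a - b| / p + b * (p - q) / (p * q) := by
    refine (abs_add_le _ _).trans (le_of_eq ?_)
    rw [abs_div, abs_of_pos hp, abs_div, abs_of_pos (mul_pos hp hq), abs_mul,
      abs_of_nonneg hb0, abs_sub_comm q p, abs_of_nonneg (by linarith : (0:ℝ) ≤ p - q)]
  refine habs.trans ?_
  have t1 : |a - b| / p ≤ 2 * ‖L‖ * d / p := (div_le_div_iff_of_pos_right hp).mpr hab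
  have t2 : b * (p - q) / (p * q) ≤ 2 * ‖L‖ * d / p := by
    have h1 : b * (p - q) ≤ (2 * ‖L‖ * q) * d :=
      mul_le_mul hb2 hpd (by linarith) (by positivity)
    have h2 : b * (p - q) / (p * q) ≤ (2 * ‖L‖ * q) * d / (p * q) :=
      (div_le_div_iff_of_pos_right (mul_pos hp hq)).mpr h1
    have e : (2 * ‖L‖ * q) * d / (p * q) = 2 * ‖L‖ * d / p := by
      field_simp
    linarith
  have e4 : 2 * ‖L‖ * d / p + 2 * ‖L‖ * d / p = 4 * ‖L‖ * d / p := by ring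
  linarith

end AuxHS

/-- `|φ(L,P) - φ(L,Q)| ≤ 4‖L‖ ‖P - Q‖₂ / max(‖P‖₂, ‖Q‖₂)`. -/
theorem statement_7 [SeparableSpace H] (P Q : H →L[ℂ] H)
    (hP : IsFinRankProj P) (hQ : IsFinRankProj Q) (L : H →L[ℂ] H) :
    |phi L P - phi L Q| ≤ 4 * ‖L‖ * hsNorm (P - Q) / max (hsNorm P) (hsNorm Q) := by
  rcases le_total (hsNorm Q) (hsNorm P) with h | h
  · rw [max_eq_left h]
    exact main_aux P Q L hP hQ h
  · rw [max_eq_right h]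
    rw [abs_sub_comm]
    calc |phi L Q - phi L P| ≤ 4 * ‖L‖ * hsNorm (Q - P) / hsNorm Q :=
          main_aux Q P L hQ hP h
      _ = 4 * ‖L‖ * hsNorm (P - Q) / hsNorm Q := by
          rw [show Q - P = -(P - Q) from (neg_sub P Q).symm, hsNorm_neg]

end
end

section
/- Let a : ℤ × ℤ → ℂ be square-summable (Σ_{k∈ℤ²} |a(k)|² < ∞) and let A be a bounded operator on ℓ²(ℕ × ℕ) whose matrix entries with respect to the canonical orthonormal basis (e_j)_{j ∈ ℕ×ℕ} satisfy ⟨A e_j, e_k⟩ = a(k − j) for all j, k ∈ ℕ × ℕ. For N ≥ 1 let P_N be the orthogonal projection onto span{e_j : j ∈ {0,...,N−1} × {0,...,N−1}}. Then φ(A, P_N) → 0 as N → ∞, and (P_N) is a proper Følner sequence for A. (In particular, every Toeplitz operator on the Hardy space H²(𝕋²) with symbol in L^∞(𝕋²) has a proper Følner sequence.) -/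
noncomputable section

open Filter Topology TopologicalSpace

variable {H : Type*} [NormedAddCommGroup H] [InnerProductSpace ℂ H] [CompleteSpace H]

/-- The canonical orthonormal basis vectors of `ℓ²(ℕ × ℕ)`. -/
noncomputable def eVec2 (j : ℕ × ℕ) : lp (fun _ : ℕ × ℕ => ℂ) 2 := lp.single 2 j 1

namespace F18

open scoped ENNReal NNReal ComplexConjugate

variable {ι κ E : Type*} [NormedAddCommGroup E] [InnerProductSpace ℂ E] [CompleteSpace E]

lemma real_tsum_eq_toReal {ι : Type*} (f : ι → ℝ) (hf : ∀ i, 0 ≤ f i) :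
    ∑' i, f i = (∑' i, ENNReal.ofReal (f i)).toReal := by
  by_cases h : Summable f
  · rw [← ENNReal.ofReal_tsum_of_nonneg hf h, ENNReal.toReal_ofReal (tsum_nonneg hf)]
  · rw [tsum_eq_zero_of_not_summable h]
    have hh : (∑' i, ENNReal.ofReal (f i)) = ∞ := by
      by_contra hne
      exact h ((ENNReal.summable_toReal hne).congr
        (fun i => by rw [ENNReal.toReal_ofReal (hf i)]))
    simp [hh]

omit [CompleteSpace E] in
lemma hasSum_inner_sq (b : HilbertBasis ι ℂ E) (x : E) :
    HasSum (fun i => ‖(inner ℂ (b i) x : ℂ)‖ ^ 2) (‖x‖ ^ 2) := by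
  have h := b.hasSum_inner_mul_inner x x
  have h2 := (Complex.reCLM : ℂ →L[ℝ] ℝ).hasSum h
  convert h2 using 2 with i
  · rw [← inner_conj_symm x (b i)]
    simp only [Complex.reCLM_apply, Complex.mul_re, Complex.conj_re, Complex.conj_im,
      Complex.sq_norm, Complex.normSq_apply]
    ring
  · simpa using (inner_self_eq_norm_sq (𝕜 := ℂ) x).symm

omit [CompleteSpace E] in
lemma tsum_enn_inner_sq (b : HilbertBasis ι ℂ E) (x : E) :
    ∑' i, (‖(inner ℂ (b i) x : ℂ)‖₊ : ℝ≥0∞) ^ 2 = (‖x‖₊ : ℝ≥0∞) ^ 2 := by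
  have h := hasSum_inner_sq b x
  have h1 : ∑' i, ENNReal.ofReal (‖(inner ℂ (b i) x : ℂ)‖ ^ 2) = ENNReal.ofReal (‖x‖ ^ 2) := by
    rw [← ENNReal.ofReal_tsum_of_nonneg (fun i => by positivity) h.summable, h.tsum_eq]
  calc ∑' i, (‖(inner ℂ (b i) x : ℂ)‖₊ : ℝ≥0∞) ^ 2
      = ∑' i, ENNReal.ofReal (‖(inner ℂ (b i) x : ℂ)‖ ^ 2) := by
        congr 1; funext i
        rw [ENNReal.ofReal_pow (norm_nonneg _), ofReal_norm, enorm_eq_nnnorm]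
    _ = ENNReal.ofReal (‖x‖ ^ 2) := h1
    _ = (‖x‖₊ : ℝ≥0∞) ^ 2 := by
        rw [ENNReal.ofReal_pow (norm_nonneg _), ofReal_norm, enorm_eq_nnnorm]

lemma ehs_adjoint (b : HilbertBasis ι ℂ E) (c : HilbertBasis κ ℂ E) (T : E →L[ℂ] E) :
    ∑' i, (‖T (b i)‖₊ : ℝ≥0∞) ^ 2
      = ∑' j, (‖(ContinuousLinearMap.adjoint T) (c j)‖₊ : ℝ≥0∞) ^ 2 := by
  calc ∑' i, (‖T (b i)‖₊ : ℝ≥0∞) ^ 2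
      = ∑' i, ∑' j, (‖(inner ℂ (c j) (T (b i)) : ℂ)‖₊ : ℝ≥0∞) ^ 2 := by
        congr 1; funext i; rw [tsum_enn_inner_sq]
    _ = ∑' j, ∑' i, (‖(inner ℂ (c j) (T (b i)) : ℂ)‖₊ : ℝ≥0∞) ^ 2 := ENNReal.tsum_comm
    _ = ∑' j, ∑' i, (‖(inner ℂ (b i) ((ContinuousLinearMap.adjoint T) (c j)) : ℂ)‖₊ : ℝ≥0∞) ^ 2 := by
        congr 1; funext j; congr 1; funext i
        rw [ContinuousLinearMap.adjoint_inner_right, ← inner_conj_symm (T (b i)) (c j),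
          RCLike.nnnorm_conj]
    _ = ∑' j, (‖(ContinuousLinearMap.adjoint T) (c j)‖₊ : ℝ≥0∞) ^ 2 := by
        congr 1; funext j; rw [tsum_enn_inner_sq]

lemma ehs_basis_indep (b : HilbertBasis ι ℂ E) (c : HilbertBasis κ ℂ E) (T : E →L[ℂ] E) :
    ∑' i, (‖T (b i)‖₊ : ℝ≥0∞) ^ 2 = ∑' j, (‖T (c j)‖₊ : ℝ≥0∞) ^ 2 := by
  rw [ehs_adjoint b c T, ehs_adjoint c c (ContinuousLinearMap.adjoint T),
    ContinuousLinearMap.adjoint_adjoint]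

lemma hsNorm_eq_basis (b : HilbertBasis ι ℂ E) (T : E →L[ℂ] E) :
    hsNorm T = Real.sqrt ((∑' i, (‖T (b i)‖₊ : ℝ≥0∞) ^ 2).toReal) := by
  obtain ⟨b0, hb0⟩ := (exists_hilbertBasis ℂ E).choose_spec
  rw [hsNorm]
  congr 1
  have h1 : ∀ i : (exists_hilbertBasis ℂ E).choose, ‖T (i : E)‖ ^ 2 = ‖T (b0 i)‖ ^ 2 := by
    intro i; rw [hb0]
  rw [tsum_congr h1, real_tsum_eq_toReal _ (fun i => by positivity)]
  congr 1
  rw [← ehs_basis_indep b0 b T]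
  congr 1; funext i
  rw [ENNReal.ofReal_pow (norm_nonneg _), ofReal_norm, enorm_eq_nnnorm]

/-! lp-specific lemmas -/

def bE : HilbertBasis (ℕ × ℕ) ℂ (lp (fun _ : ℕ × ℕ => ℂ) 2) :=
  HilbertBasis.ofRepr (LinearIsometryEquiv.refl ℂ _)

lemma bE_apply (j : ℕ × ℕ) : bE j = eVec2 j := by
  apply bE.repr.injective
  rw [HilbertBasis.repr_self]
  rfl

lemma eVec2_coord (j k : ℕ × ℕ) : (eVec2 j : ∀ _ : ℕ × ℕ, ℂ) k = if k = j then 1 else 0 := by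
  rw [eVec2, lp.single_apply]
  split <;> simp_all

lemma inner_eVec2_left (k : ℕ × ℕ) (f : lp (fun _ : ℕ × ℕ => ℂ) 2) :
    (inner ℂ (eVec2 k) f : ℂ) = f k := by
  rw [eVec2, lp.inner_single_left]
  simp

lemma sum_single_coord (s : Finset (ℕ × ℕ)) (c : ℕ × ℕ → ℂ) (k : ℕ × ℕ) :
    ((∑ j ∈ s, c j • eVec2 j : lp (fun _ : ℕ × ℕ => ℂ) 2) : ∀ _ : ℕ × ℕ, ℂ) k
      = if k ∈ s then c k else 0 := by
  rw [lp.coeFn_sum, Finset.sum_apply]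
  have : ∀ j ∈ s, (⇑(c j • eVec2 j) : ∀ _ : ℕ × ℕ, ℂ) k = if k = j then c j else 0 := by
    intro j _
    rw [lp.coeFn_smul, Pi.smul_apply, eVec2_coord]
    split <;> simp
  rw [Finset.sum_congr rfl this, Finset.sum_ite_eq s k c]

lemma enorm_sq_eq (f : lp (fun _ : ℕ × ℕ => ℂ) 2) :
    (‖f‖₊ : ℝ≥0∞) ^ 2 = ∑' k, (‖(f : ∀ _ : ℕ × ℕ, ℂ) k‖₊ : ℝ≥0∞) ^ 2 := by
  have h2 : (0:ℝ) < (2 : ℝ≥0∞).toReal := by norm_num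
  have h := lp.hasSum_norm h2 f
  have h' : HasSum (fun k => ‖(f : ∀ _ : ℕ × ℕ, ℂ) k‖ ^ 2) (‖f‖ ^ 2) := by
    have e2 : (2 : ℝ≥0∞).toReal = (2:ℝ) := by norm_num
    simpa [e2, Real.rpow_natCast] using h
  have h1 : ∑' k, ENNReal.ofReal (‖(f : ∀ _ : ℕ × ℕ, ℂ) k‖ ^ 2) = ENNReal.ofReal (‖f‖ ^ 2) := by
    rw [← ENNReal.ofReal_tsum_of_nonneg (fun i => by positivity) h'.summable, h'.tsum_eq]
  have e1 : ((‖f‖₊ : ℝ≥0∞)) ^ 2 = ENNReal.ofReal (‖f‖ ^ 2) := by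
    rw [ENNReal.ofReal_pow (norm_nonneg _), ofReal_norm, enorm_eq_nnnorm]
  rw [e1, ← h1]
  congr 1; funext k
  rw [ENNReal.ofReal_pow (norm_nonneg _), ofReal_norm, enorm_eq_nnnorm]

lemma norm_eVec2 (j : ℕ × ℕ) : ‖eVec2 j‖ = 1 := by
  have h2 : (0:ℝ) < (2 : ℝ≥0∞).toReal := by norm_num
  have := lp.norm_single (E := fun _ : ℕ × ℕ => ℂ) (p := 2) (by norm_num) j (1:ℂ)
  simpa [eVec2] using this

def SN (N : ℕ) : Finset (ℕ × ℕ) := Finset.range (N+1) ×ˢ Finset.range (N+1)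

lemma mem_SN {N : ℕ} {j : ℕ × ℕ} : j ∈ SN N ↔ j.1 ≤ N ∧ j.2 ≤ N := by
  simp [SN, Nat.lt_succ_iff]

lemma card_SN (N : ℕ) : (SN N).card = (N+1) * (N+1) := by
  simp [SN]

lemma proj_formula {p : lp (fun _ : ℕ × ℕ => ℂ) 2 →L[ℂ] lp (fun _ : ℕ × ℕ => ℂ) 2} {N : ℕ}
    (hidem : IsIdempotentElem p) (hsa : IsSelfAdjoint p)
    (hr : LinearMap.range (p : lp (fun _ : ℕ × ℕ => ℂ) 2 →ₗ[ℂ] lp (fun _ : ℕ × ℕ => ℂ) 2) = Submodule.span ℂ (eVec2 '' {j : ℕ × ℕ | j.1 ≤ N ∧ j.2 ≤ N}))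
    (x : lp (fun _ : ℕ × ℕ => ℂ) 2) :
    p x = ∑ j ∈ SN N, ((x : ∀ _ : ℕ × ℕ, ℂ) j) • eVec2 j := by
  set K := Submodule.span ℂ (eVec2 '' {j : ℕ × ℕ | j.1 ≤ N ∧ j.2 ≤ N}) with hK
  have hadj : ContinuousLinearMap.adjoint p = p := by
    rw [← ContinuousLinearMap.star_eq_adjoint]; exact hsa
  have hmove : ∀ u v : lp (fun _ : ℕ × ℕ => ℂ) 2, (inner ℂ (p u) v : ℂ) = inner ℂ u (p v) := by
    intro u v
    conv_lhs => rw [← hadj]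
    rw [ContinuousLinearMap.adjoint_inner_left]
  have hpp : ∀ y, p (p y) = p y := by
    intro y
    have := DFunLike.congr_fun hidem y
    simpa [ContinuousLinearMap.mul_apply] using this
  have hgen : ∀ j ∈ SN N, eVec2 j ∈ K := by
    intro j hj
    exact Submodule.subset_span ⟨j, mem_SN.mp hj, rfl⟩
  set Q : lp (fun _ : ℕ × ℕ => ℂ) 2 := ∑ j ∈ SN N, ((x : ∀ _ : ℕ × ℕ, ℂ) j) • eVec2 j with hQ
  have hQK : Q ∈ K :=
    Submodule.sum_mem _ fun j hj => Submodule.smul_mem _ _ (hgen j hj)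
  have hPK : p x ∈ K := by
    rw [← hr]; exact LinearMap.mem_range_self _ x
  have horth : ∀ v ∈ K, (inner ℂ (x - p x) v : ℂ) = 0 := by
    intro v hv
    rw [← hr] at hv
    obtain ⟨y, rfl⟩ := hv
    rw [ContinuousLinearMap.coe_coe, inner_sub_left, hmove x (p y), hpp y, sub_self]
  have horthQ : ∀ j ∈ SN N, (inner ℂ (x - Q) (eVec2 j) : ℂ) = 0 := by
    intro j hj
    rw [← inner_conj_symm, inner_eVec2_left]
    have : ((x - Q : lp (fun _ : ℕ × ℕ => ℂ) 2) : ∀ _ : ℕ × ℕ, ℂ) j = 0 := by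
      rw [lp.coeFn_sub, Pi.sub_apply, hQ, sum_single_coord, if_pos hj, sub_self]
    rw [this, map_zero]
  have hd0 : ∀ j ∈ SN N, (inner ℂ (p x - Q) (eVec2 j) : ℂ) = 0 := by
    intro j hj
    have h' : p x - Q = (x - Q) - (x - p x) := by abel
    rw [h', inner_sub_left, horthQ j hj, horth _ (hgen j hj), sub_self]
  have hker : K ≤ LinearMap.ker ((innerSL ℂ (p x - Q) : lp (fun _ : ℕ × ℕ => ℂ) 2 →ₗ[ℂ] ℂ)) := by
    rw [Submodule.span_le]
    rintro v ⟨j, hj, rfl⟩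
    exact LinearMap.mem_ker.mpr (hd0 j (mem_SN.mpr hj))
  have hdd : (inner ℂ (p x - Q) (p x - Q) : ℂ) = 0 :=
    LinearMap.mem_ker.mp (hker (Submodule.sub_mem _ hPK hQK))
  exact sub_eq_zero.mp (inner_self_eq_zero.mp hdd)

lemma line_count (N : ℕ) (t : ℤ) :
    ((Finset.range (N+1)).filter
      (fun i : ℕ => ¬(0 ≤ (i:ℤ) + t ∧ (i:ℤ) + t ≤ N))).card ≤ t.natAbs := by
  have hsub : (Finset.range (N+1)).filter
      (fun i : ℕ => ¬(0 ≤ (i:ℤ) + t ∧ (i:ℤ) + t ≤ N))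
      ⊆ (Finset.Ico (N+1-t.toNat) (N+1)) ∪ Finset.range ((-t).toNat) := by
    intro i hi
    simp only [Finset.mem_filter, Finset.mem_range, Finset.mem_union, Finset.mem_Ico] at hi ⊢
    omega
  calc ((Finset.range (N+1)).filter _).card
      ≤ _ := Finset.card_le_card hsub
    _ ≤ (Finset.Ico (N+1-t.toNat) (N+1)).card + (Finset.range ((-t).toNat)).card :=
        Finset.card_union_le _ _
    _ ≤ t.natAbs := by rw [Nat.card_Ico, Finset.card_range]; omega

lemma square_count (N : ℕ) (m : ℤ × ℤ) :
    ((SN N).filter (fun j : ℕ × ℕ =>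
      ¬(0 ≤ (j.1:ℤ) + m.1 ∧ (j.1:ℤ) + m.1 ≤ N ∧ 0 ≤ (j.2:ℤ) + m.2 ∧ (j.2:ℤ) + m.2 ≤ N))).card
      ≤ (N+1) * (m.1.natAbs + m.2.natAbs) := by
  set B1 := (Finset.range (N+1)).filter (fun i : ℕ => ¬(0 ≤ (i:ℤ) + m.1 ∧ (i:ℤ) + m.1 ≤ N))
  set B2 := (Finset.range (N+1)).filter (fun i : ℕ => ¬(0 ≤ (i:ℤ) + m.2 ∧ (i:ℤ) + m.2 ≤ N))
  have hsub : (SN N).filter (fun j : ℕ × ℕ =>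
      ¬(0 ≤ (j.1:ℤ) + m.1 ∧ (j.1:ℤ) + m.1 ≤ N ∧ 0 ≤ (j.2:ℤ) + m.2 ∧ (j.2:ℤ) + m.2 ≤ N))
      ⊆ (B1 ×ˢ Finset.range (N+1)) ∪ (Finset.range (N+1) ×ˢ B2) := by
    intro j hj
    simp only [SN, Finset.mem_filter, Finset.mem_product, Finset.mem_range, Finset.mem_union,
      B1, B2] at hj ⊢
    omega
  calc ((SN N).filter _).card
      ≤ _ := Finset.card_le_card hsub
    _ ≤ (B1 ×ˢ Finset.range (N+1)).card + (Finset.range (N+1) ×ˢ B2).card :=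
        Finset.card_union_le _ _
    _ = B1.card * (N+1) + (N+1) * B2.card := by
        rw [Finset.card_product, Finset.card_product, Finset.card_range]
    _ ≤ m.1.natAbs * (N+1) + (N+1) * m.2.natAbs :=
        Nat.add_le_add (Nat.mul_le_mul_right _ (line_count N m.1))
          (Nat.mul_le_mul_left _ (line_count N m.2))
    _ = (N+1) * (m.1.natAbs + m.2.natAbs) := by ring


def wgt (N : ℕ) (m : ℤ × ℤ) : ℕ := min ((N+1) * (N+1)) ((N+1) * (m.1.natAbs + m.2.natAbs))

lemma keyE_aux (a : ℤ × ℤ → ℂ)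
    (A : lp (fun _ : ℕ × ℕ => ℂ) 2 →L[ℂ] lp (fun _ : ℕ × ℕ => ℂ) 2)
    (P : ℕ → lp (fun _ : ℕ × ℕ => ℂ) 2 →L[ℂ] lp (fun _ : ℕ × ℕ => ℂ) 2)
    (hCcoord : ∀ N j k,
      (((A * P N - P N * A) (eVec2 j) : lp (fun _ : ℕ × ℕ => ℂ) 2) : ∀ _ : ℕ × ℕ, ℂ) k
      = ((if j ∈ SN N then (1:ℂ) else 0) - (if k ∈ SN N then (1:ℂ) else 0))
          * a ((k.1 : ℤ) - (j.1 : ℤ), (k.2 : ℤ) - (j.2 : ℤ))) :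
    ∀ N, ∑' j : ℕ × ℕ, (‖(A * P N - P N * A) (eVec2 j)‖₊ : ℝ≥0∞) ^ 2
      ≤ ∑' m : ℤ × ℤ, ((2 * wgt N m : ℕ) : ℝ≥0∞) * ((‖a m‖₊ : ℝ≥0∞) ^ 2) := by
  classical
  intro N
  set β : ℤ × ℤ → ℝ≥0∞ := fun m => (‖a m‖₊ : ℝ≥0∞) ^ 2 with hβ
  set km : ℕ × ℕ → ℕ × ℕ → ℤ × ℤ :=
    fun j k => ((k.1 : ℤ) - (j.1 : ℤ), (k.2 : ℤ) - (j.2 : ℤ)) with hkm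
  -- pointwise split of the coordinate norms
  have hterm : ∀ j k,
      (‖(((A * P N - P N * A) (eVec2 j) : lp (fun _ : ℕ × ℕ => ℂ) 2) : ∀ _ : ℕ × ℕ, ℂ) k‖₊
          : ℝ≥0∞) ^ 2
      = (if j ∈ SN N then (1:ℝ≥0∞) else 0) * ((if k ∈ SN N then (0:ℝ≥0∞) else 1) * β (km j k))
        + (if k ∈ SN N then (1:ℝ≥0∞) else 0)
            * ((if j ∈ SN N then (0:ℝ≥0∞) else 1) * β (km j k)) := by
    intro j k
    rw [hCcoord]
    by_cases hj : j ∈ SN N <;> by_cases hk : k ∈ SN N <;>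
      simp [hj, hk, hβ, hkm, nnnorm_mul, ENNReal.coe_mul, mul_pow]
  -- the two halves
  have hsplit : ∑' j : ℕ × ℕ, (‖(A * P N - P N * A) (eVec2 j)‖₊ : ℝ≥0∞) ^ 2
      = (∑' j : ℕ × ℕ, (if j ∈ SN N then (1:ℝ≥0∞) else 0)
            * ∑' k : ℕ × ℕ, (if k ∈ SN N then (0:ℝ≥0∞) else 1) * β (km j k))
        + ∑' k : ℕ × ℕ, (if k ∈ SN N then (1:ℝ≥0∞) else 0)
            * ∑' j : ℕ × ℕ, (if j ∈ SN N then (0:ℝ≥0∞) else 1) * β (km j k) := by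
    calc ∑' j : ℕ × ℕ, (‖(A * P N - P N * A) (eVec2 j)‖₊ : ℝ≥0∞) ^ 2
        = ∑' (j) (k), ((if j ∈ SN N then (1:ℝ≥0∞) else 0)
              * ((if k ∈ SN N then (0:ℝ≥0∞) else 1) * β (km j k))
            + (if k ∈ SN N then (1:ℝ≥0∞) else 0)
              * ((if j ∈ SN N then (0:ℝ≥0∞) else 1) * β (km j k))) := by
          congr 1; funext j
          rw [enorm_sq_eq]
          congr 1; funext k
          exact hterm j k
      _ = (∑' (j) (k), (if j ∈ SN N then (1:ℝ≥0∞) else 0)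
              * ((if k ∈ SN N then (0:ℝ≥0∞) else 1) * β (km j k)))
          + ∑' (j) (k), (if k ∈ SN N then (1:ℝ≥0∞) else 0)
              * ((if j ∈ SN N then (0:ℝ≥0∞) else 1) * β (km j k)) := by
          rw [← ENNReal.tsum_add]
          congr 1; funext j
          rw [← ENNReal.tsum_add]
      _ = _ := by
          congr 1
          · congr 1; funext j
            rw [ENNReal.tsum_mul_left]
          · rw [ENNReal.tsum_comm]
            congr 1; funext k
            rw [ENNReal.tsum_mul_left]
  rw [hsplit]
  -- T1 bound
  set f1 : ℕ × ℕ → ℤ × ℤ → ℝ≥0∞ := fun j m =>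
    if (0 ≤ m.1 + (j.1:ℤ) ∧ 0 ≤ m.2 + (j.2:ℤ)
        ∧ ¬(m.1 + (j.1:ℤ) ≤ N ∧ m.2 + (j.2:ℤ) ≤ N)) then β m else 0 with hf1
  have hre1 : ∀ j : ℕ × ℕ,
      ∑' k : ℕ × ℕ, (if k ∈ SN N then (0:ℝ≥0∞) else 1) * β (km j k) = ∑' m, f1 j m := by
    intro j
    have hinj : Function.Injective (km j) := by
      intro k k' h
      simp only [hkm, Prod.mk.injEq] at h
      ext
      · omega
      · omega
    have hsupp : Function.support (f1 j) ⊆ Set.range (km j) := by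
      intro m hm
      simp only [hf1, Function.mem_support, ne_eq, ite_eq_right_iff, not_forall] at hm
      obtain ⟨⟨h1, h2, -⟩, -⟩ := hm
      refine ⟨((m.1 + (j.1:ℤ)).toNat, (m.2 + (j.2:ℤ)).toNat), ?_⟩
      rw [Prod.ext_iff]
      simp only [hkm]
      constructor
      · omega
      · omega
    rw [← Function.Injective.tsum_eq hinj hsupp]
    refine (tsum_congr fun k => ?_).symm
    have hiff : (0 ≤ (km j k).1 + (j.1:ℤ) ∧ 0 ≤ (km j k).2 + (j.2:ℤ)
        ∧ ¬((km j k).1 + (j.1:ℤ) ≤ N ∧ (km j k).2 + (j.2:ℤ) ≤ N))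
        ↔ ¬(k.1 ≤ N ∧ k.2 ≤ N) := by
      simp only [hkm]
      omega
    by_cases hk : k ∈ SN N
    · rw [hf1]
      simp only
      rw [if_neg (by rw [hiff]; exact not_not_intro (mem_SN.mp hk)), if_pos hk, zero_mul]
    · rw [hf1]
      simp only
      rw [if_pos (by rw [hiff]; exact fun h => hk (mem_SN.mpr h)), if_neg hk, one_mul]
  have hT1 : (∑' j : ℕ × ℕ, (if j ∈ SN N then (1:ℝ≥0∞) else 0)
        * ∑' k : ℕ × ℕ, (if k ∈ SN N then (0:ℝ≥0∞) else 1) * β (km j k))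
      ≤ ∑' m : ℤ × ℤ, ((wgt N m : ℕ) : ℝ≥0∞) * β m := by
    rw [tsum_eq_sum (s := SN N) (fun j hj => by rw [if_neg hj, zero_mul])]
    rw [Finset.sum_congr rfl (fun j hj => by rw [if_pos hj, one_mul, hre1 j])]
    rw [← Summable.tsum_finsetSum (fun j _ => ENNReal.summable)]
    refine ENNReal.tsum_le_tsum fun m => ?_
    have hcard : ∑ j ∈ SN N, f1 j m
        = ((SN N).filter (fun j : ℕ × ℕ => 0 ≤ m.1 + (j.1:ℤ) ∧ 0 ≤ m.2 + (j.2:ℤ)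
            ∧ ¬(m.1 + (j.1:ℤ) ≤ N ∧ m.2 + (j.2:ℤ) ≤ N))).card • β m := by
      rw [hf1]
      simp only
      rw [Finset.sum_ite, Finset.sum_const, Finset.sum_const_zero, add_zero]
    rw [hcard, nsmul_eq_mul]
    refine mul_le_mul_left (Nat.cast_le.mpr (le_min ?_ ?_)) _
    · exact le_trans (Finset.card_filter_le _ _) (le_of_eq (card_SN N))
    · refine le_trans (Finset.card_le_card ?_) (square_count N m)
      intro j hj
      simp only [Finset.mem_filter] at hj ⊢
      exact ⟨hj.1, by omega⟩
  -- T2 bound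
  set f2 : ℕ × ℕ → ℤ × ℤ → ℝ≥0∞ := fun k m =>
    if (0 ≤ (k.1:ℤ) - m.1 ∧ 0 ≤ (k.2:ℤ) - m.2
        ∧ ¬((k.1:ℤ) - m.1 ≤ N ∧ (k.2:ℤ) - m.2 ≤ N)) then β m else 0 with hf2
  have hre2 : ∀ k : ℕ × ℕ,
      ∑' j : ℕ × ℕ, (if j ∈ SN N then (0:ℝ≥0∞) else 1) * β (km j k) = ∑' m, f2 k m := by
    intro k
    have hinj : Function.Injective (fun j : ℕ × ℕ => km j k) := by
      intro j j' h
      simp only [hkm, Prod.mk.injEq] at h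
      ext
      · omega
      · omega
    have hsupp : Function.support (f2 k) ⊆ Set.range (fun j : ℕ × ℕ => km j k) := by
      intro m hm
      simp only [hf2, Function.mem_support, ne_eq, ite_eq_right_iff, not_forall] at hm
      obtain ⟨⟨h1, h2, -⟩, -⟩ := hm
      refine ⟨(((k.1:ℤ) - m.1).toNat, ((k.2:ℤ) - m.2).toNat), ?_⟩
      rw [Prod.ext_iff]
      simp only [hkm]
      constructor
      · omega
      · omega
    rw [← Function.Injective.tsum_eq hinj hsupp]
    refine (tsum_congr fun j => ?_).symm
    have hiff : (0 ≤ (k.1:ℤ) - (km j k).1 ∧ 0 ≤ (k.2:ℤ) - (km j k).2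
        ∧ ¬((k.1:ℤ) - (km j k).1 ≤ N ∧ (k.2:ℤ) - (km j k).2 ≤ N))
        ↔ ¬(j.1 ≤ N ∧ j.2 ≤ N) := by
      simp only [hkm]
      omega
    by_cases hj : j ∈ SN N
    · rw [hf2]
      simp only
      rw [if_neg (by rw [hiff]; exact not_not_intro (mem_SN.mp hj)), if_pos hj, zero_mul]
    · rw [hf2]
      simp only
      rw [if_pos (by rw [hiff]; exact fun h => hj (mem_SN.mpr h)), if_neg hj, one_mul]
  have hT2 : (∑' k : ℕ × ℕ, (if k ∈ SN N then (1:ℝ≥0∞) else 0)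
        * ∑' j : ℕ × ℕ, (if j ∈ SN N then (0:ℝ≥0∞) else 1) * β (km j k))
      ≤ ∑' m : ℤ × ℤ, ((wgt N m : ℕ) : ℝ≥0∞) * β m := by
    rw [tsum_eq_sum (s := SN N) (fun k hk => by rw [if_neg hk, zero_mul])]
    rw [Finset.sum_congr rfl (fun k hk => by rw [if_pos hk, one_mul, hre2 k])]
    rw [← Summable.tsum_finsetSum (fun k _ => ENNReal.summable)]
    refine ENNReal.tsum_le_tsum fun m => ?_
    have hcard : ∑ k ∈ SN N, f2 k m
        = ((SN N).filter (fun k : ℕ × ℕ => 0 ≤ (k.1:ℤ) - m.1 ∧ 0 ≤ (k.2:ℤ) - m.2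
            ∧ ¬((k.1:ℤ) - m.1 ≤ N ∧ (k.2:ℤ) - m.2 ≤ N))).card • β m := by
      rw [hf2]
      simp only
      rw [Finset.sum_ite, Finset.sum_const, Finset.sum_const_zero, add_zero]
    rw [hcard, nsmul_eq_mul]
    refine mul_le_mul_left (Nat.cast_le.mpr (le_min ?_ ?_)) _
    · exact le_trans (Finset.card_filter_le _ _) (le_of_eq (card_SN N))
    · have hsc := square_count N (-m.1, -m.2)
      simp only [Int.natAbs_neg] at hsc
      refine le_trans (Finset.card_le_card ?_) hsc
      intro k hk
      simp only [Finset.mem_filter] at hk ⊢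
      exact ⟨hk.1, by omega⟩
  refine le_trans (add_le_add hT1 hT2) (le_of_eq ?_)
  rw [← ENNReal.tsum_add]
  refine tsum_congr fun m => ?_
  push_cast
  ring

end F18

open F18
open scoped ENNReal NNReal

/-- If `A` is a bounded operator on `ℓ²(ℕ × ℕ)` whose matrix entries are
`⟨A e_j, e_k⟩ = a(k - j)` for a square-summable `a : ℤ × ℤ → ℂ`, then the projections
onto `span{e_j : j ∈ {0,…,N} × {0,…,N}}` form a proper Følner sequence for `A`. -/
theorem statement_18 (a : ℤ × ℤ → ℂ) (ha : Summable fun k : ℤ × ℤ => ‖a k‖ ^ 2)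
    (A : lp (fun _ : ℕ × ℕ => ℂ) 2 →L[ℂ] lp (fun _ : ℕ × ℕ => ℂ) 2)
    (hA : ∀ j k : ℕ × ℕ,
      (inner ℂ (eVec2 k) (A (eVec2 j)) : ℂ)
        = a ((k.1 : ℤ) - (j.1 : ℤ), (k.2 : ℤ) - (j.2 : ℤ)))
    (P : ℕ → lp (fun _ : ℕ × ℕ => ℂ) 2 →L[ℂ] lp (fun _ : ℕ × ℕ => ℂ) 2)
    (hproj : ∀ N, IsOrthProjection (P N))
    (hrange : ∀ N, LinearMap.range (P N : lp (fun _ : ℕ × ℕ => ℂ) 2 →ₗ[ℂ] lp (fun _ : ℕ × ℕ => ℂ) 2)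
        = Submodule.span ℂ (eVec2 '' {j : ℕ × ℕ | j.1 ≤ N ∧ j.2 ≤ N})) :
    Tendsto (fun N => phi A (P N)) atTop (nhds 0) ∧ IsProperFolnerSeq A P := by
  classical
  have hPapply : ∀ N x, P N x = ∑ j ∈ SN N, ((x : ∀ _ : ℕ × ℕ, ℂ) j) • eVec2 j :=
    fun N x => proj_formula (hproj N).1 (hproj N).2 (hrange N) x
  have hPcoord : ∀ N (y : lp (fun _ : ℕ × ℕ => ℂ) 2) k,
      ((P N y : lp (fun _ : ℕ × ℕ => ℂ) 2) : ∀ _ : ℕ × ℕ, ℂ) k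
        = if k ∈ SN N then (y : ∀ _ : ℕ × ℕ, ℂ) k else 0 := fun N y k => by
    rw [hPapply, sum_single_coord]
  have hPe : ∀ N j, P N (eVec2 j) = if j ∈ SN N then eVec2 j else 0 := by
    intro N j
    rw [hPapply]
    have h1 : ∀ i ∈ SN N, ((eVec2 j : ∀ _ : ℕ × ℕ, ℂ) i) • eVec2 i
        = if i = j then eVec2 i else 0 := by
      intro i _
      rw [eVec2_coord]
      split <;> simp
    rw [Finset.sum_congr rfl h1, Finset.sum_ite_eq' (SN N) j eVec2]
  have hAe : ∀ j k, ((A (eVec2 j)) : ∀ _ : ℕ × ℕ, ℂ) k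
      = a ((k.1 : ℤ) - (j.1 : ℤ), (k.2 : ℤ) - (j.2 : ℤ)) := fun j k => by
    rw [← inner_eVec2_left, hA]
  have hCcoord : ∀ N j k,
      (((A * P N - P N * A) (eVec2 j) : lp (fun _ : ℕ × ℕ => ℂ) 2) : ∀ _ : ℕ × ℕ, ℂ) k
      = ((if j ∈ SN N then (1:ℂ) else 0) - (if k ∈ SN N then (1:ℂ) else 0))
          * a ((k.1 : ℤ) - (j.1 : ℤ), (k.2 : ℤ) - (j.2 : ℤ)) := by
    intro N j k
    rw [ContinuousLinearMap.sub_apply, ContinuousLinearMap.mul_apply,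
      ContinuousLinearMap.mul_apply, lp.coeFn_sub, Pi.sub_apply, hPcoord, hPe]
    by_cases hj : j ∈ SN N <;> by_cases hk : k ∈ SN N <;>
      simp [hj, hk, hAe, sub_mul]
  -- the key ENNReal estimate
  have keyE := keyE_aux a A P hCcoord
  -- HS norms via the canonical basis
  have hsC : ∀ N, hsNorm (A * P N - P N * A)
      = Real.sqrt ((∑' j : ℕ × ℕ,
          (‖(A * P N - P N * A) (eVec2 j)‖₊ : ℝ≥0∞) ^ 2).toReal) := by
    intro N
    rw [hsNorm_eq_basis bE]
    congr 2
    refine tsum_congr fun j => ?_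
    rw [bE_apply]
  have hEP : ∀ N, (∑' j : ℕ × ℕ, (‖P N (eVec2 j)‖₊ : ℝ≥0∞) ^ 2)
      = (((N+1) * (N+1) : ℕ) : ℝ≥0∞) := by
    intro N
    have h1 : ∀ j, (‖P N (eVec2 j)‖₊ : ℝ≥0∞) ^ 2 = if j ∈ SN N then 1 else 0 := by
      intro j
      rw [hPe]
      split
      · rw [← enorm_eq_nnnorm, ← ofReal_norm, norm_eVec2]
        simp
      · simp
    rw [tsum_congr h1, tsum_eq_sum (s := SN N) (fun j hj => if_neg hj),
      Finset.sum_congr rfl (fun j hj => if_pos hj), Finset.sum_const, card_SN]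
    simp
  have hsP : ∀ N, hsNorm (P N) = (N : ℝ) + 1 := by
    intro N
    rw [hsNorm_eq_basis bE]
    rw [tsum_congr (fun j => by rw [bE_apply]), hEP, ENNReal.toReal_natCast]
    push_cast
    rw [show ((N:ℝ)+1) * ((N:ℝ)+1) = ((N:ℝ)+1)^2 by ring, Real.sqrt_sq (by positivity)]
  -- the real-valued dominating sequence
  set g : ℕ → ℤ × ℤ → ℝ :=
    fun N m => ((2 * wgt N m : ℕ) : ℝ) * ‖a m‖ ^ 2 / ((N:ℝ)+1)^2 with hg
  have hNpos : ∀ N : ℕ, (0:ℝ) < (N:ℝ)+1 := fun N => by positivity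
  have hg0 : ∀ N m, 0 ≤ g N m := fun N m => by rw [hg]; positivity
  have hwle : ∀ N m, (2 * wgt N m : ℕ) ≤ 2 * ((N+1) * (N+1)) := fun N m => by
    have := min_le_left ((N+1) * (N+1)) ((N+1) * (m.1.natAbs + m.2.natAbs))
    simp only [wgt]
    omega
  have hgle2 : ∀ N m, g N m ≤ 2 * ‖a m‖ ^ 2 := by
    intro N m
    rw [hg]
    simp only
    rw [div_le_iff₀ (by positivity)]
    calc ((2 * wgt N m : ℕ) : ℝ) * ‖a m‖ ^ 2
        ≤ ((2 * ((N+1) * (N+1)) : ℕ) : ℝ) * ‖a m‖ ^ 2 := by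
          have h' : ((2 * wgt N m : ℕ) : ℝ) ≤ ((2 * ((N+1) * (N+1)) : ℕ) : ℝ) := by
            exact_mod_cast hwle N m
          gcongr
      _ = 2 * ‖a m‖ ^ 2 * ((N:ℝ)+1)^2 := by push_cast; ring
  have hgsummable : ∀ N, Summable (g N) :=
    fun N => Summable.of_nonneg_of_le (hg0 N) (hgle2 N) (ha.mul_left 2)
  have hGnonneg : ∀ N, 0 ≤ ∑' m, g N m := fun N => tsum_nonneg (hg0 N)
  -- ENNReal-to-real bridge
  have hEtoG : ∀ N, (∑' j : ℕ × ℕ, (‖(A * P N - P N * A) (eVec2 j)‖₊ : ℝ≥0∞) ^ 2).toReal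
      ≤ ((N:ℝ)+1)^2 * ∑' m, g N m := by
    intro N
    have h2 : ∀ m : ℤ × ℤ, ((2 * wgt N m : ℕ) : ℝ≥0∞) * ((‖a m‖₊ : ℝ≥0∞) ^ 2)
        = ENNReal.ofReal (((N:ℝ)+1)^2 * g N m) := by
      intro m
      rw [hg]
      simp only
      rw [show ((N:ℝ)+1)^2 * (((2 * wgt N m : ℕ) : ℝ) * ‖a m‖ ^ 2 / ((N:ℝ)+1)^2)
          = ((2 * wgt N m : ℕ) : ℝ) * ‖a m‖ ^ 2 by field_simp]
      rw [ENNReal.ofReal_mul (by positivity), ENNReal.ofReal_natCast,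
        ENNReal.ofReal_pow (norm_nonneg _), ofReal_norm, enorm_eq_nnnorm]
    have h3 : Summable fun m => ((N:ℝ)+1)^2 * g N m := (hgsummable N).mul_left _
    have h4 : ∑' m : ℤ × ℤ, ((2 * wgt N m : ℕ) : ℝ≥0∞) * ((‖a m‖₊ : ℝ≥0∞) ^ 2)
        = ENNReal.ofReal (((N:ℝ)+1)^2 * ∑' m, g N m) := by
      rw [tsum_congr h2, ← ENNReal.ofReal_tsum_of_nonneg
        (fun m => mul_nonneg (by positivity) (hg0 N m)) h3, tsum_mul_left]
    have h5 := keyE N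
    rw [h4] at h5
    calc (∑' j : ℕ × ℕ, (‖(A * P N - P N * A) (eVec2 j)‖₊ : ℝ≥0∞) ^ 2).toReal
        ≤ (ENNReal.ofReal (((N:ℝ)+1)^2 * ∑' m, g N m)).toReal :=
          ENNReal.toReal_mono ENNReal.ofReal_ne_top h5
      _ = ((N:ℝ)+1)^2 * ∑' m, g N m :=
          ENNReal.toReal_ofReal (mul_nonneg (by positivity) (hGnonneg N))
  -- the phi bound
  have hphile : ∀ N, phi A (P N) ≤ Real.sqrt (∑' m, g N m) := by
    intro N
    rw [phi, hsC, hsP, div_le_iff₀ (hNpos N)]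
    calc Real.sqrt ((∑' j : ℕ × ℕ,
          (‖(A * P N - P N * A) (eVec2 j)‖₊ : ℝ≥0∞) ^ 2).toReal)
        ≤ Real.sqrt (((N:ℝ)+1)^2 * ∑' m, g N m) := Real.sqrt_le_sqrt (hEtoG N)
      _ = Real.sqrt (∑' m, g N m) * ((N:ℝ)+1) := by
          rw [Real.sqrt_mul (by positivity), Real.sqrt_sq (by positivity)]
          ring
  have hphi0 : ∀ N, 0 ≤ phi A (P N) := by
    intro N
    rw [phi, hsNorm, hsNorm]
    exact div_nonneg (Real.sqrt_nonneg _) (Real.sqrt_nonneg _)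
  -- G tends to 0 by dominated convergence
  have hGt : Tendsto (fun N => ∑' m, g N m) atTop (𝓝 0) := by
    have hpt : ∀ m : ℤ × ℤ, Tendsto (fun N => g N m) atTop (𝓝 0) := by
      intro m
      set c : ℝ := ((m.1.natAbs + m.2.natAbs : ℕ) : ℝ) with hc
      have hb : ∀ N : ℕ, g N m ≤ (2 * c * ‖a m‖ ^ 2) * (1/((N:ℝ)+1)) := by
        intro N
        have hwm : (2 * wgt N m : ℕ) ≤ 2 * ((N+1) * (m.1.natAbs + m.2.natAbs)) := by
          have := min_le_right ((N+1) * (N+1)) ((N+1) * (m.1.natAbs + m.2.natAbs))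
          simp only [wgt]
          omega
        rw [hg]
        simp only
        rw [div_le_iff₀ (by positivity)]
        calc ((2 * wgt N m : ℕ) : ℝ) * ‖a m‖ ^ 2
            ≤ ((2 * ((N+1) * (m.1.natAbs + m.2.natAbs)) : ℕ) : ℝ) * ‖a m‖ ^ 2 := by
              have h' : ((2 * wgt N m : ℕ) : ℝ)
                  ≤ ((2 * ((N+1) * (m.1.natAbs + m.2.natAbs)) : ℕ) : ℝ) := by
                exact_mod_cast hwm
              gcongr
          _ = (2 * c * ‖a m‖ ^ 2) * (1/((N:ℝ)+1)) * ((N:ℝ)+1)^2 := by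
              rw [hc]
              push_cast
              field_simp
      have hbt : Tendsto (fun N : ℕ => (2 * c * ‖a m‖ ^ 2) * (1/((N:ℝ)+1)))
          atTop (𝓝 0) := by
        have := tendsto_one_div_add_atTop_nhds_zero_nat.const_mul (2 * c * ‖a m‖ ^ 2)
        simpa using this
      exact squeeze_zero (fun N => hg0 N m) hb hbt
    have hbd : ∀ᶠ N in (atTop : Filter ℕ), ∀ m : ℤ × ℤ, ‖g N m‖ ≤ 2 * ‖a m‖ ^ 2 :=
      Eventually.of_forall fun N m => by
        rw [Real.norm_eq_abs, abs_of_nonneg (hg0 N m)]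
        exact hgle2 N m
    have := tendsto_tsum_of_dominated_convergence (ha.mul_left 2) hpt hbd
    simpa using this
  have hsqrtG : Tendsto (fun N => Real.sqrt (∑' m, g N m)) atTop (𝓝 0) := by
    have := (Real.continuous_sqrt.tendsto 0).comp hGt
    simpa [Function.comp_def] using this
  have htphi : Tendsto (fun N => phi A (P N)) atTop (𝓝 0) :=
    squeeze_zero hphi0 hphile hsqrtG
  refine ⟨htphi, ?_, ?_, ?_, htphi⟩
  · -- finite rank projections
    intro n
    refine ⟨hproj n, ?_, ?_⟩
    · intro h0
      have h1 := hPe n (0,0)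
      rw [if_pos (mem_SN.mpr ⟨Nat.zero_le _, Nat.zero_le _⟩), h0,
        ContinuousLinearMap.zero_apply] at h1
      have h2 := norm_eVec2 (0,0)
      rw [← h1, norm_zero] at h2
      norm_num at h2
    · rw [hrange n]
      have hfin : (eVec2 '' {j : ℕ × ℕ | j.1 ≤ n ∧ j.2 ≤ n}).Finite := by
        apply Set.Finite.image
        have hset : {j : ℕ × ℕ | j.1 ≤ n ∧ j.2 ≤ n} = ↑(SN n) := by
          ext j
          simp [mem_SN]
        rw [hset]
        exact (SN n).finite_toSet
      exact FiniteDimensional.span_of_finite ℂ hfin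
  · -- positivity of increments
    intro n
    have hsub : SN n ⊆ SN (n+1) := fun j hj => by
      have := mem_SN.mp hj
      exact mem_SN.mpr ⟨by omega, by omega⟩
    have hP'P : ∀ x, P (n+1) (P n x) = P n x := by
      intro x
      rw [hPapply (n+1) (P n x)]
      have h1 : ∀ j ∈ SN (n+1), ((P n x : lp (fun _ : ℕ × ℕ => ℂ) 2) : ∀ _ : ℕ × ℕ, ℂ) j • eVec2 j
          = (if j ∈ SN n then ((x : ∀ _ : ℕ × ℕ, ℂ) j) else 0) • eVec2 j := fun j _ => by
        rw [hPcoord]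
      rw [Finset.sum_congr rfl h1,
        ← Finset.sum_subset hsub (fun j _ hj => by rw [if_neg hj, zero_smul]),
        Finset.sum_congr rfl (fun j hj => by rw [if_pos hj])]
      exact (hPapply n x).symm
    have hPP' : ∀ x, P n (P (n+1) x) = P n x := by
      intro x
      rw [hPapply n (P (n+1) x), hPapply n x]
      refine Finset.sum_congr rfl fun j hj => ?_
      rw [hPcoord, if_pos (hsub hj)]
    have hQsa : IsSelfAdjoint (P (n+1) - P n) := (hproj (n+1)).2.sub (hproj n).2
    refine ⟨hQsa.isSymmetric, fun x => ?_⟩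
    have e1 : ∀ y, P (n+1) (P (n+1) y) = P (n+1) y := fun y => by
      simpa [ContinuousLinearMap.mul_apply] using DFunLike.congr_fun (hproj (n+1)).1 y
    have e2 : ∀ y, P n (P n y) = P n y := fun y => by
      simpa [ContinuousLinearMap.mul_apply] using DFunLike.congr_fun (hproj n).1 y
    have hQQ : (P (n+1) - P n) ((P (n+1) - P n) x) = (P (n+1) - P n) x := by
      simp only [ContinuousLinearMap.sub_apply, map_sub]
      rw [e1, e2, hP'P, hPP']
      abel
    have hadjQ : ContinuousLinearMap.adjoint (P (n+1) - P n) = P (n+1) - P n := by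
      rw [← ContinuousLinearMap.star_eq_adjoint]
      exact hQsa
    rw [ContinuousLinearMap.reApplyInnerSelf_apply]
    have hkey : (inner ℂ ((P (n+1) - P n) x) x : ℂ)
        = inner ℂ ((P (n+1) - P n) x) ((P (n+1) - P n) x) := by
      conv_lhs => rw [← hQQ]
      conv_lhs => rw [← hadjQ]
      rw [ContinuousLinearMap.adjoint_inner_left, hadjQ]
    rw [hkey]
    exact inner_self_nonneg
  · -- strong convergence to the identity
    intro x
    have hsum : HasSum (fun j : ℕ × ℕ => lp.single 2 j ((x : ∀ _ : ℕ × ℕ, ℂ) j)) x :=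
      lp.hasSum_single ENNReal.ofNat_ne_top x
    have hmono : Monotone (fun n => SN n) := by
      intro n n' h j hj
      have := mem_SN.mp hj
      exact mem_SN.mpr ⟨le_trans this.1 h, le_trans this.2 h⟩
    have hexh : ∀ j : ℕ × ℕ, ∃ n, j ∈ SN n :=
      fun j => ⟨max j.1 j.2, mem_SN.mpr ⟨le_max_left _ _, le_max_right _ _⟩⟩
    have htend : Tendsto (fun n => SN n) atTop atTop :=
      tendsto_atTop_finset_of_monotone hmono hexh
    have hcomp := (hsum : Tendsto _ atTop (𝓝 x)).comp htend
    have heq : ∀ n, (∑ j ∈ SN n, lp.single 2 j ((x : ∀ _ : ℕ × ℕ, ℂ) j)) = P n x := by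
      intro n
      rw [hPapply n x]
      refine Finset.sum_congr rfl fun j _ => ?_
      have := lp.single_smul (E := fun _ : ℕ × ℕ => ℂ) 2 j ((x : ∀ _ : ℕ × ℕ, ℂ) j) (1:ℂ)
      rw [smul_eq_mul, mul_one] at this
      rw [this, eVec2]
    refine hcomp.congr fun n => ?_
    simp only [Function.comp]
    exact heq n

end
end
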